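/- arXiv:math/0012022 — 4 statements merged into one kernel-verified Lean document; each statement's English description precedes it below -/
import Mathlib

section
/- Let (T, ∧, 𝕀) and (T′, ∧′, 𝕀′) be two monogenic monoidal triangulated categories. Let F : T → T′ be a lax monoidal triangulated functor that preserves arbitrary coproducts, with unit morphism η : 𝕀′ → F(𝕀) and structure maps φ_{A,B} : F(A) ∧′ F(B) → F(A ∧ B) natural in A and B and compatible with the shift in each variable. If η is an isomorphism and φ_{𝕀,𝕀} : F(𝕀) ∧′ F(𝕀) → F(𝕀 ∧ 𝕀) is an isomorphism, then φ_{A,B} is an isomorphism for all objects A and B; that is, F is strong monoidal. -/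
/-!
STATEMENT 0: Let `(T, ∧, 𝕀)` and `(T′, ∧′, 𝕀′)` be two monogenic monoidal triangulated
categories and let `F : T → T′` be a lax monoidal triangulated functor preserving arbitrary
coproducts, with unit morphism `η : 𝕀′ → F 𝕀` and structure maps
`φ A B : F A ∧′ F B ⟶ F (A ∧ B)` natural in both variables and compatible with the shift in
each variable.  If `η` and `φ 𝕀 𝕀` are isomorphisms, then every `φ A B` is an isomorphism,
i.e. `F` is strong monoidal.
-/

open CategoryTheory Category Limits Pretriangulated MonoidalCategory

universe v u

namespace Paper

variable {C : Type u} [Category.{v} C]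

/-- The canonical map `⊕ᵢ Hom(G, Aᵢ) →+ Hom(G, ∐ᵢ Aᵢ)`. -/
noncomputable def coproductComparison [Preadditive C] (G : C) {ι : Type v} (A : ι → C)
    [HasCoproduct A] : DirectSum ι (fun i => G ⟶ A i) →+ (G ⟶ ∐ A) :=
  letI := Classical.decEq ι
  DirectSum.toAddMonoid fun i =>
    AddMonoidHom.mk' (fun g => g ≫ Sigma.ι A i) fun _ _ => Preadditive.add_comp _ _ _ _ _ _

/-- An object `G` is small if for every family of objects admitting a coproduct, the
canonical map `⊕ᵢ Hom(G, Aᵢ) → Hom(G, ∐ᵢ Aᵢ)` is an isomorphism (bijective). -/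
def IsSmallObject [Preadditive C] (G : C) : Prop :=
  ∀ ⦃ι : Type v⦄ (A : ι → C) [HasCoproduct A], Function.Bijective (coproductComparison G A)

/-- An object `G` is a weak generator if a map `f : X ⟶ Y` is an isomorphism exactly when
`Hom(G⟦n⟧, X) → Hom(G⟦n⟧, Y)` is bijective for all integers `n`. -/
def IsWeakGenerator [HasShift C ℤ] (G : C) : Prop :=
  ∀ ⦃X Y : C⦄ (f : X ⟶ Y),
    IsIso f ↔ ∀ n : ℤ, Function.Bijective fun g : G⟦n⟧ ⟶ X => g ≫ f

end Paper

open Paper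

namespace Gen

variable {C : Type u} [Category.{v} C] [Preadditive C]

lemma coproductComparison_of {K : C} {ι : Type v} (A : ι → C) [HasCoproduct A]
    [DecidableEq ι] (i : ι) (g : K ⟶ A i) :
    coproductComparison K A (DirectSum.of _ i g) = g ≫ Sigma.ι A i :=
  DirectSum.toAddMonoid_of
    (fun i => AddMonoidHom.mk' (fun g => g ≫ Sigma.ι A i)
      fun _ _ => Preadditive.add_comp _ _ _ _ _ _) i g

/-- Transfer of bijectivity of the coproduct comparison along compatible bijections. -/
lemma bij_transfer {ι : Type v} {K L : C} {A B : ι → C} [HasCoproduct A] [HasCoproduct B]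
    (e : ∀ i, (K ⟶ A i) → (L ⟶ B i)) (hebij : ∀ i, Function.Bijective (e i))
    (headd : ∀ i f g, e i (f + g) = e i f + e i g)
    (E : (K ⟶ ∐ A) → (L ⟶ ∐ B)) (hEbij : Function.Bijective E)
    (hEadd : ∀ f g, E (f + g) = E f + E g)
    (hcomm : ∀ i (g : K ⟶ A i), E (g ≫ Sigma.ι A i) = e i g ≫ Sigma.ι B i)
    (h : Function.Bijective (coproductComparison K A)) :
    Function.Bijective (coproductComparison L B) := by
  letI := Classical.decEq ι
  let eA : ∀ i, (K ⟶ A i) ≃+ (L ⟶ B i) := fun i =>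
    AddEquiv.mk' (Equiv.ofBijective _ (hebij i)) (headd i)
  let M : DirectSum ι (fun i => K ⟶ A i) ≃+ DirectSum ι (fun i => L ⟶ B i) :=
    DFinsupp.mapRange.addEquiv eA
  have hM : ∀ (i : ι) (g : K ⟶ A i),
      M (DirectSum.of _ i g) = DirectSum.of _ i (e i g) := by
    intro i g
    exact DFinsupp.mapRange_single (f := fun i => eA i) (hf := fun i => (eA i).map_zero)
  have key : ∀ d, coproductComparison L B (M d) = E (coproductComparison K A d) := by
    intro d
    have : (coproductComparison L B).comp M.toAddMonoidHom =
        (AddMonoidHom.mk' E hEadd).comp (coproductComparison K A) := by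
      apply DirectSum.addHom_ext
      intro i g
      simp only [AddMonoidHom.coe_comp, Function.comp_apply, AddEquiv.coe_toAddMonoidHom]
      rw [hM, coproductComparison_of, coproductComparison_of]
      exact (hcomm i g).symm
    exact DFunLike.congr_fun this d
  constructor
  · intro d₁ d₂ hd
    rw [← M.apply_symm_apply d₁, ← M.apply_symm_apply d₂, key, key] at hd
    have := h.1 (hEbij.1 hd)
    exact M.symm.injective this
  · intro y
    obtain ⟨x, hx⟩ := hEbij.2 y
    obtain ⟨d, hd⟩ := h.2 x
    exact ⟨M d, by rw [key, hd, hx]⟩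

section ShiftSmall

variable [HasShift C ℤ] [∀ n : ℤ, (shiftFunctor C n).Additive] [HasCoproducts.{v} C]

lemma bij_shiftMapComp (n : ℤ) {K Y Z : C} (w : ((Y⟦n⟧ : C) ≅ Z)) :
    Function.Bijective (fun g : K ⟶ Y => (shiftFunctor C n).map g ≫ w.hom) := by
  constructor
  · intro g₁ g₂ hg
    apply (shiftFunctor C n).map_injective
    dsimp at hg
    rwa [← cancel_mono w.hom]
  · intro x
    refine ⟨(shiftFunctor C n).preimage (x ≫ w.inv), ?_⟩
    simp

lemma isSmallObject_shift {K : C} (h : IsSmallObject K) (n : ℤ) :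
    IsSmallObject ((K⟦n⟧ : C)) := by
  intro ι A _
  set w := shiftFunctorCompIsoId C (-n) n (neg_add_cancel n) with hw
  let c : (∐ fun i => ((A i)⟦-n⟧ : C)) ⟶ ((∐ A)⟦-n⟧ : C) :=
    sigmaComparison (shiftFunctor C (-n)) A
  have hc : IsIso c := by infer_instance
  refine bij_transfer
    (fun i (g : K ⟶ (A i)⟦-n⟧) => (shiftFunctor C n).map g ≫ w.hom.app (A i))
    (fun i => bij_shiftMapComp n (w.app (A i)))
    (fun i f g => by rw [Functor.map_add, Preadditive.add_comp])
    (fun (g : K ⟶ ∐ fun i => ((A i)⟦-n⟧ : C)) =>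
      (shiftFunctor C n).map (g ≫ c) ≫ w.hom.app (∐ A))
    ?_ (fun f g => by rw [Preadditive.add_comp, Functor.map_add, Preadditive.add_comp]) ?_
    (h _)
  · have : (fun (g : K ⟶ ∐ fun i => ((A i)⟦-n⟧ : C)) =>
        (shiftFunctor C n).map (g ≫ c) ≫ w.hom.app (∐ A)) =
        (fun g' : K ⟶ ((∐ A)⟦-n⟧ : C) => (shiftFunctor C n).map g' ≫ w.hom.app (∐ A)) ∘
        (fun g => g ≫ c) := rfl
    rw [this]
    exact (bij_shiftMapComp n (w.app (∐ A))).comp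
      ⟨fun g₁ g₂ hg => by rwa [← cancel_mono c], fun x => ⟨x ≫ inv c, by simp⟩⟩
  · intro i g
    have h1 : (g ≫ Sigma.ι (fun i => ((A i)⟦-n⟧ : C)) i) ≫ c =
        g ≫ (shiftFunctor C (-n)).map (Sigma.ι A i) := by
      rw [assoc, ι_comp_sigmaComparison]
    have h2 := w.hom.naturality (Sigma.ι A i)
    dsimp at h2
    rw [h1, Functor.map_comp, assoc, h2]
    simp

end ShiftSmall

section Tower

variable [HasZeroObject C] [HasShift C ℤ] [∀ n : ℤ, (shiftFunctor C n).Additive]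
  [Pretriangulated C] [HasCoproducts.{v} C]

variable (G X : C)

structure StepData (Z : C) (f : Z ⟶ X) where
  idx : Type v
  deg : idx → ℤ
  Z' : C
  e : Z ⟶ Z'
  h3 : Z' ⟶ ((∐ fun i => (G⟦deg i⟧ : C))⟦(1:ℤ)⟧ : C)
  w : (∐ fun i => (G⟦deg i⟧ : C)) ⟶ Z
  dist : Triangle.mk w e h3 ∈ distTriang C
  f' : Z' ⟶ X
  fac : e ≫ f' = f
  kill : ∀ (m : ℤ) (g : (G⟦m⟧ : C) ⟶ Z), g ≫ f = 0 → g ≫ e = 0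

abbrev κStep (Z : C) (f : Z ⟶ X) : Type v := (m : ℤ) × {g : (G⟦m⟧ : C) ⟶ Z // g ≫ f = 0}

noncomputable def step (Z : C) (f : Z ⟶ X) : StepData G X Z f :=
  let w : (∐ fun p : κStep G X Z f => (G⟦p.1⟧ : C)) ⟶ Z := Sigma.desc fun p => p.2.1
  have H := distinguished_cocone_triangle w
  let Z' := H.choose
  let e := H.choose_spec.choose
  let h3 := H.choose_spec.choose_spec.choose
  have hdist : Triangle.mk w e h3 ∈ distTriang C := H.choose_spec.choose_spec.choose_spec
  have hwf : w ≫ f = 0 := by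
    apply colimit.hom_ext
    intro ⟨p⟩
    simp only [w, comp_zero, colimit.ι_desc_assoc, Discrete.functor_obj_eq_as, Cofan.mk_pt,
      Cofan.mk_ι_app]
    exact p.2.2
  have Hf := Triangle.yoneda_exact₂ _ hdist f hwf
  { idx := κStep G X Z f, deg := fun p => p.1, Z' := Z', e := e, h3 := h3, w := w,
    dist := hdist, f' := Hf.choose, fac := Hf.choose_spec.symm,
    kill := by
      intro m g hg
      have hg' : g = Sigma.ι (fun p : κStep G X Z f => (G⟦p.1⟧ : C)) ⟨m, g, hg⟩ ≫ w := by simp [w]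
      have hz : w ≫ e = 0 := comp_distTriang_mor_zero₁₂ _ hdist
      rw [hg', assoc, hz, comp_zero] }

noncomputable def tower : ∀ _ : ℕ, Σ' (Z : C), Z ⟶ X := fun n =>
  Nat.rec
    ⟨∐ fun p : (m : ℤ) × ((G⟦m⟧ : C) ⟶ X) => (G⟦p.1⟧ : C), Sigma.desc fun p => p.2⟩
    (fun _ t => ⟨(step G X t.1 t.2).Z', (step G X t.1 t.2).f'⟩) n

noncomputable def obj (i : ℕ) : C := (tower G X i).1

noncomputable def toX (i : ℕ) : obj G X i ⟶ X := (tower G X i).2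

noncomputable def stepI (i : ℕ) : StepData G X (obj G X i) (toX G X i) :=
  step G X (obj G X i) (toX G X i)

noncomputable def mapT (i : ℕ) : obj G X i ⟶ obj G X (i + 1) := (stepI G X i).e

lemma fac (i : ℕ) : mapT G X i ≫ toX G X (i + 1) = toX G X i := (stepI G X i).fac

lemma kill (i : ℕ) (m : ℤ) (g : (G⟦m⟧ : C) ⟶ obj G X i) (hg : g ≫ toX G X i = 0) :
    g ≫ mapT G X i = 0 := (stepI G X i).kill m g hg

noncomputable abbrev fam : ULift.{v} ℕ → C := fun i => obj G X i.down

noncomputable def sMap : (∐ fam G X) ⟶ (∐ fam G X) :=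
  Sigma.desc fun i => mapT G X i.down ≫ Sigma.ι (fam G X) (ULift.up (i.down + 1))

noncomputable def pMap : (∐ fam G X) ⟶ X := Sigma.desc fun i => toX G X i.down

lemma ι_sMap (i : ULift.{v} ℕ) :
    Sigma.ι (fam G X) i ≫ sMap G X = mapT G X i.down ≫ Sigma.ι (fam G X) (ULift.up (i.down + 1)) :=
  colimit.ι_desc _ _

lemma ι_pMap (i : ULift.{v} ℕ) : Sigma.ι (fam G X) i ≫ pMap G X = toX G X i.down :=
  colimit.ι_desc _ _


section Key

variable (K : C)

noncomputable def sigmaHom :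
    DirectSum (ULift.{v} ℕ) (fun i => K ⟶ fam G X i) →+
      DirectSum (ULift.{v} ℕ) (fun i => K ⟶ fam G X i) :=
  DirectSum.toAddMonoid fun i =>
    (DirectSum.of (fun j : ULift.{v} ℕ => K ⟶ fam G X j) (ULift.up (i.down + 1))).comp
      (AddMonoidHom.mk' (fun g => g ≫ mapT G X i.down)
        fun _ _ => Preadditive.add_comp _ _ _ _ _ _)

set_option maxHeartbeats 1000000 in
lemma sigmaHom_of (i : ULift.{v} ℕ) (g : K ⟶ fam G X i) :
    sigmaHom G X K (DirectSum.of _ i g) =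
      DirectSum.of (fun j : ULift.{v} ℕ => K ⟶ fam G X j) (ULift.up (i.down + 1))
        (g ≫ mapT G X i.down) := by
  simp only [sigmaHom]
  rw [DirectSum.toAddMonoid_of]
  rfl

lemma cp_sigmaHom (d : DirectSum (ULift.{v} ℕ) (fun i => K ⟶ fam G X i)) :
    coproductComparison K (fam G X) (sigmaHom G X K d) =
      coproductComparison K (fam G X) d ≫ sMap G X := by
  have h : (coproductComparison K (fam G X)).comp (sigmaHom G X K) =
      (AddMonoidHom.mk' (fun x => x ≫ sMap G X)
        fun _ _ => Preadditive.add_comp _ _ _ _ _ _).comp (coproductComparison K (fam G X)) := by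
    apply DirectSum.addHom_ext
    intro i g
    show coproductComparison K (fam G X)
        (sigmaHom G X K (DirectSum.of (fun i => K ⟶ fam G X i) i g)) =
      coproductComparison K (fam G X) (DirectSum.of (fun i => K ⟶ fam G X i) i g) ≫ sMap G X
    rw [sigmaHom_of, coproductComparison_of, coproductComparison_of, assoc, assoc, ι_sMap]
  exact DFunLike.congr_fun h d

lemma sigmaHom_apply_zero (d : DirectSum (ULift.{v} ℕ) (fun i => K ⟶ fam G X i)) :
    sigmaHom G X K d (ULift.up 0) = 0 := by
  have h : (DFinsupp.evalAddMonoidHom (β := fun i : ULift.{v} ℕ => K ⟶ fam G X i)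
      (ULift.up 0)).comp (sigmaHom G X K) = 0 := by
    apply DirectSum.addHom_ext
    intro i g
    show sigmaHom G X K (DirectSum.of (fun i => K ⟶ fam G X i) i g) (ULift.up 0) = 0
    rw [sigmaHom_of]
    exact DirectSum.of_eq_of_ne _ _ _ (by simp)
  exact DFunLike.congr_fun h d

lemma sigmaHom_apply_succ (d : DirectSum (ULift.{v} ℕ) (fun i => K ⟶ fam G X i)) (j : ℕ) :
    sigmaHom G X K d (ULift.up (j + 1)) = d (ULift.up j) ≫ mapT G X j := by
  have h : (DFinsupp.evalAddMonoidHom (β := fun i : ULift.{v} ℕ => K ⟶ fam G X i)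
      (ULift.up (j + 1))).comp (sigmaHom G X K) =
      (AddMonoidHom.mk' (fun g : K ⟶ fam G X (ULift.up j) => g ≫ mapT G X j)
        fun _ _ => Preadditive.add_comp _ _ _ _ _ _).comp
        (DFinsupp.evalAddMonoidHom (ULift.up j)) := by
    apply DirectSum.addHom_ext
    intro i g
    show sigmaHom G X K (DirectSum.of (fun i => K ⟶ fam G X i) i g) (ULift.up (j + 1)) =
      ((DirectSum.of (fun i => K ⟶ fam G X i) i g) (ULift.up j) : K ⟶ fam G X (ULift.up j)) ≫
        mapT G X j
    rw [sigmaHom_of]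
    by_cases hi : i = ULift.up j
    · subst hi
      dsimp only
      rw [DirectSum.of_eq_same, DirectSum.of_eq_same]
    · have h1 : ULift.up (i.down + 1) ≠ ULift.up (j + 1) := by
        simp only [ne_eq, ULift.up_inj]
        intro hc
        exact hi (by cases i; simp_all)
      rw [DirectSum.of_eq_of_ne _ _ _ h1.symm, DirectSum.of_eq_of_ne _ _ _ (Ne.symm hi), zero_comp]
  exact DFunLike.congr_fun h d

lemma eq_zero_of_comp_sub (hK : IsSmallObject K) (x : K ⟶ (∐ fam G X))
    (hx : x ≫ (𝟙 ((∐ fam G X)) - sMap G X) = 0) : x = 0 := by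
  obtain ⟨d, rfl⟩ := (hK (fam G X)).2 x
  rw [Preadditive.comp_sub, comp_id, sub_eq_zero] at hx
  rw [← cp_sigmaHom] at hx
  have hd : d = sigmaHom G X K d := (hK (fam G X)).1 hx
  have hz : ∀ j : ℕ, d (ULift.up j) = 0 := by
    intro j
    induction j with
    | zero =>
      conv_lhs => rw [hd]
      exact sigmaHom_apply_zero G X K d
    | succ j ih =>
      conv_lhs => rw [hd]
      rw [sigmaHom_apply_succ, ih, zero_comp]
  have hd0 : d = 0 := by
    apply DFinsupp.ext
    intro i
    cases i
    exact hz _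
  rw [hd0, map_zero]

noncomputable def qHom : DirectSum (ULift.{v} ℕ) (fun i => K ⟶ fam G X i) →+ (K ⟶ X) :=
  DirectSum.toAddMonoid fun i =>
    AddMonoidHom.mk' (fun g => g ≫ toX G X i.down) fun _ _ => Preadditive.add_comp _ _ _ _ _ _

set_option maxHeartbeats 1000000 in
lemma qHom_of (i : ULift.{v} ℕ) (g : K ⟶ fam G X i) :
    qHom G X K (DirectSum.of _ i g) = g ≫ toX G X i.down := by
  simp only [qHom]
  rw [DirectSum.toAddMonoid_of]
  rfl

lemma cp_p (d : DirectSum (ULift.{v} ℕ) (fun i => K ⟶ fam G X i)) :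
    coproductComparison K (fam G X) d ≫ pMap G X = qHom G X K d := by
  have h : (AddMonoidHom.mk' (fun x : K ⟶ (∐ fam G X) => x ≫ pMap G X)
      fun _ _ => Preadditive.add_comp _ _ _ _ _ _).comp (coproductComparison K (fam G X)) =
      qHom G X K := by
    apply DirectSum.addHom_ext
    intro i g
    show coproductComparison K (fam G X) (DirectSum.of (fun i => K ⟶ fam G X i) i g) ≫ pMap G X =
      qHom G X K (DirectSum.of (fun i => K ⟶ fam G X i) i g)
    rw [coproductComparison_of, qHom_of, assoc, ι_pMap]
  exact DFunLike.congr_fun h d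

lemma eval_sum (L : ℕ) (c : ∀ k : ℕ, K ⟶ fam G X (ULift.up k)) (m : ℕ) :
    ((∑ k ∈ Finset.range L,
        DirectSum.of (fun i : ULift.{v} ℕ => K ⟶ fam G X i) (ULift.up k) (c k)) (ULift.up m))
      = if m < L then c m else 0 := by
  rw [DFinsupp.finset_sum_apply]
  by_cases hm : m < L
  · rw [if_pos hm, Finset.sum_eq_single_of_mem m (Finset.mem_range.2 hm)]
    · exact DirectSum.of_eq_same _ _
    · intro k _ hk
      exact DirectSum.of_eq_of_ne _ _ _ (by simpa using Ne.symm hk)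
  · rw [if_neg hm, Finset.sum_eq_zero]
    intro k hk
    refine DirectSum.of_eq_of_ne _ _ _ ?_
    simp only [Finset.mem_range] at hk
    simp only [ne_eq, ULift.up_inj]
    omega

end Key

lemma exists_pre_of_comp_p (hsmall : IsSmallObject G) (n : ℤ)
    (x : (G⟦n⟧ : C) ⟶ (∐ fam G X)) (hx : x ≫ pMap G X = 0) :
    ∃ y : (G⟦n⟧ : C) ⟶ (∐ fam G X), x = y ≫ (𝟙 ((∐ fam G X)) - sMap G X) := by
  classical
  obtain ⟨d, hd⟩ := ((isSmallObject_shift hsmall n) (fam G X)).2 x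
  have hq : qHom G X (G⟦n⟧ : C) d = 0 := by rw [← cp_p, hd]; exact hx
  set N : ℕ := d.support.sup (fun i => i.down) with hNdef
  have hdN : ∀ k : ℕ, N < k → d (ULift.up k) = 0 := by
    intro k hk
    by_contra h
    have h1 : (ULift.up k : ULift.{v} ℕ) ∈ d.support := DFinsupp.mem_support_iff.2 h
    have h2 := Finset.le_sup (f := fun i : ULift.{v} ℕ => i.down) h1
    rw [← hNdef] at h2
    simp only [ULift.up_down] at h2
    omega
  let t : ∀ j : ℕ, ((G⟦n⟧ : C) ⟶ obj G X j) := fun j =>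
    Nat.rec (motive := fun j => (G⟦n⟧ : C) ⟶ obj G X j) (d (ULift.up 0))
      (fun j tj => Add.add (tj ≫ mapT G X j) (d (ULift.up (j + 1)))) j
  have ht0 : t 0 = d (ULift.up 0) := rfl
  have htsucc : ∀ j, t (j + 1) = Add.add (t j ≫ mapT G X j) (d (ULift.up (j + 1))) :=
    fun _ => rfl
  have haddeq : ∀ (j : ℕ) (a b : (G⟦n⟧ : C) ⟶ obj G X (j + 1)), Add.add a b = a + b :=
    fun _ _ _ => rfl
  let trunc : ℕ → DirectSum (ULift.{v} ℕ) (fun i => (G⟦n⟧ : C) ⟶ fam G X i) := fun j =>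
    ∑ k ∈ Finset.range (j + 1),
      DirectSum.of (fun i : ULift.{v} ℕ => (G⟦n⟧ : C) ⟶ fam G X i) (ULift.up k) (d (ULift.up k))
  have htr : ∀ j, t j ≫ toX G X j = qHom G X (G⟦n⟧ : C) (trunc j) := by
    intro j
    induction j with
    | zero =>
      show t 0 ≫ toX G X 0 = qHom G X (G⟦n⟧ : C) (∑ k ∈ Finset.range 1, _)
      rw [Finset.sum_range_one, qHom_of, ht0]
    | succ j ih =>
      have h1 : trunc (j + 1) = trunc j +
          DirectSum.of (fun i : ULift.{v} ℕ => (G⟦n⟧ : C) ⟶ fam G X i) (ULift.up (j + 1))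
            (d (ULift.up (j + 1))) := Finset.sum_range_succ _ _
      rw [htsucc, haddeq, Preadditive.add_comp, assoc, fac, ih, h1, map_add, qHom_of]
  have htrunc_eq : ∀ j, N ≤ j → trunc j = d := by
    intro j hj
    apply DFinsupp.ext
    intro i
    cases' i with m
    show (trunc j) (ULift.up m) = d (ULift.up m)
    rw [eval_sum]
    by_cases hm : m < j + 1
    · rw [if_pos hm]
    · rw [if_neg hm, hdN m (by omega)]
  have hkillN : ∀ j, N ≤ j → t j ≫ mapT G X j = 0 := by
    intro j hj
    apply kill G X j n
    rw [htr, htrunc_eq j hj, hq]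
  set d' : DirectSum (ULift.{v} ℕ) (fun i => (G⟦n⟧ : C) ⟶ fam G X i) :=
    ∑ k ∈ Finset.range (N + 1),
      DirectSum.of (fun i : ULift.{v} ℕ => (G⟦n⟧ : C) ⟶ fam G X i) (ULift.up k) (t k) with hd'def
  have hd'ap : ∀ m : ℕ, d' (ULift.up m) = if m < N + 1 then t m else 0 := by
    intro m
    rw [hd'def]
    exact eval_sum G X (G⟦n⟧ : C) (N + 1) t m
  refine ⟨coproductComparison (G⟦n⟧ : C) (fam G X) d', ?_⟩
  have key : d' - sigmaHom G X (G⟦n⟧ : C) d' = d := by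
    apply DFinsupp.ext
    intro i
    cases' i with m
    rw [DFinsupp.sub_apply]
    show d' (ULift.up m) - (sigmaHom G X (G⟦n⟧ : C) d') (ULift.up m) = d (ULift.up m)
    cases m with
    | zero =>
      rw [sigmaHom_apply_zero, sub_zero, hd'ap, if_pos (by omega), ht0]
    | succ m =>
      rw [sigmaHom_apply_succ, hd'ap, hd'ap]
      by_cases h1 : m + 1 < N + 1
      · rw [if_pos h1, if_pos (by omega), htsucc, haddeq, add_sub_cancel_left]
      · by_cases h2 : m < N + 1
        · have hm : m = N := by omega
          rw [if_neg h1, if_pos h2, hm, hkillN N le_rfl, sub_zero,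
            hdN (N + 1) (by omega)]
        · rw [if_neg h1, if_neg h2, zero_comp, sub_zero, hdN (m + 1) (by omega)]
  rw [← hd, ← key, map_sub, cp_sigmaHom, Preadditive.comp_sub, comp_id]

lemma shifted_inj (hsmall : IsSmallObject G) (n : ℤ)
    (z : (G⟦n⟧ : C) ⟶ (((∐ fam G X))⟦(1:ℤ)⟧ : C))
    (hz : z ≫ (𝟙 ((∐ fam G X)) - sMap G X)⟦(1:ℤ)⟧' = 0) : z = 0 := by
  set w := shiftFunctorCompIsoId C (1 : ℤ) (-1 : ℤ) (by omega) with hwdef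
  have hx : ((shiftFunctor C (-1 : ℤ)).map z ≫ w.hom.app ((∐ fam G X))) ≫
      (𝟙 ((∐ fam G X)) - sMap G X) = 0 := by
    have hnat := w.hom.naturality (𝟙 ((∐ fam G X)) - sMap G X)
    dsimp only [Functor.comp_obj, Functor.comp_map, Functor.id_obj, Functor.id_map] at hnat
    rw [assoc, ← hnat, ← Functor.map_comp_assoc, hz, Functor.map_zero, zero_comp]
  have h0 := eq_zero_of_comp_sub G X ((G⟦n⟧ : C)⟦(-1 : ℤ)⟧)
    (isSmallObject_shift (isSmallObject_shift hsmall n) (-1)) _ hx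
  have h1 : (shiftFunctor C (-1 : ℤ)).map z = 0 := by
    have h2 : IsIso (w.hom.app ((∐ fam G X))) := inferInstance
    rw [← cancel_mono (w.hom.app ((∐ fam G X))), zero_comp]
    exact h0
  apply (shiftFunctor C (-1 : ℤ)).map_injective
  rw [h1, Functor.map_zero]

lemma ι_toX_zero (n : ℤ) (g : (G⟦n⟧ : C) ⟶ X) :
    Sigma.ι (fun p : (m : ℤ) × ((G⟦m⟧ : C) ⟶ X) => (G⟦p.1⟧ : C)) ⟨n, g⟩ ≫ toX G X 0 = g := by
  show Sigma.ι (fun p : (m : ℤ) × ((G⟦m⟧ : C) ⟶ X) => (G⟦p.1⟧ : C)) ⟨n, g⟩ ≫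
    Sigma.desc (fun p => p.2) = g
  simp

end Tower

theorem generation {C : Type u} [Category.{v} C] [Preadditive C] [HasZeroObject C]
    [HasShift C ℤ] [∀ n : ℤ, (shiftFunctor C n).Additive] [Pretriangulated C]
    [HasCoproducts.{v} C]
    (G : C) (hsmall : IsSmallObject G) (hgen : IsWeakGenerator G)
    (P : C → Prop)
    (hP_iso : ∀ {Y Z : C}, (Y ≅ Z) → P Y → P Z)
    (hP_shift : ∀ (Y : C) (n : ℤ), P Y → P ((Y⟦n⟧ : C)))
    (hP_tri : ∀ (T : Triangle C), (T ∈ distTriang C) → P T.obj₁ → P T.obj₂ → P T.obj₃)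
    (hP_coprod : ∀ {ι : Type v} (A : ι → C) [HasCoproduct A], (∀ i, P (A i)) → P (∐ A))
    (hPG : P G) (X : C) : P X := by
  have hPobj : ∀ i, P (obj G X i) := by
    intro i
    induction i with
    | zero => exact hP_coprod _ (fun p => hP_shift G p.1 hPG)
    | succ i ih =>
      exact hP_tri _ (stepI G X i).dist (hP_coprod _ (fun p => hP_shift G _ hPG)) ih
  have hPB : P ((∐ fam G X)) := hP_coprod _ (fun i => hPobj i.down)
  obtain ⟨Y, q, r, hT⟩ := distinguished_cocone_triangle (𝟙 ((∐ fam G X)) - sMap G X)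
  have hsp : (𝟙 ((∐ fam G X)) - sMap G X) ≫ pMap G X = 0 := by
    apply colimit.hom_ext
    rintro ⟨i⟩
    show Sigma.ι (fam G X) i ≫ (𝟙 ((∐ fam G X)) - sMap G X) ≫ pMap G X = Sigma.ι (fam G X) i ≫ 0
    simp only [comp_zero, Preadditive.sub_comp, Preadditive.comp_sub, id_comp]
    rw [ι_pMap, ← assoc, ι_sMap, assoc, ι_pMap]
    dsimp only
    rw [fac, sub_self]
  obtain ⟨φX, hφX0⟩ : ∃ φX : Y ⟶ X, pMap G X = q ≫ φX := Triangle.yoneda_exact₂ _ hT (pMap G X) hsp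
  have hφX : pMap G X = q ≫ φX := hφX0
  have hiso : IsIso φX := by
    rw [hgen φX]
    intro n
    constructor
    · intro g₁ g₂ hg
      dsimp only at hg
      have h0 : (g₁ - g₂) ≫ φX = 0 := by rw [Preadditive.sub_comp, hg, sub_self]
      have h2 : (g₁ - g₂) ≫ r = 0 := by
        apply shifted_inj G X hsmall n
        have h3 : r ≫ (𝟙 ((∐ fam G X)) - sMap G X)⟦(1 : ℤ)⟧' = 0 :=
          comp_distTriang_mor_zero₃₁ _ hT
        rw [assoc, h3, comp_zero]
      obtain ⟨g', hg'0⟩ : ∃ g' : _ ⟶ (∐ fam G X), g₁ - g₂ = g' ≫ q := Triangle.coyoneda_exact₃ _ hT (g₁ - g₂) h2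
      have hg' : g₁ - g₂ = g' ≫ q := hg'0
      have h3 : g' ≫ pMap G X = 0 := by
        rw [hφX, ← assoc, ← hg', h0]
      obtain ⟨y, hy⟩ := exists_pre_of_comp_p G X hsmall n g' h3
      have h4 : g₁ - g₂ = 0 := by
        have h5 : (𝟙 ((∐ fam G X)) - sMap G X) ≫ q = 0 :=
          comp_distTriang_mor_zero₁₂ _ hT
        rw [hg', hy, assoc, h5, comp_zero]
      rw [← sub_eq_zero]
      exact h4
    · intro g
      refine ⟨(Sigma.ι (fun p : (m : ℤ) × ((G⟦m⟧ : C) ⟶ X) => (G⟦p.1⟧ : C)) ⟨n, g⟩ ≫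
        Sigma.ι (fam G X) (ULift.up 0)) ≫ q, ?_⟩
      dsimp only
      have := ι_toX_zero G X n g
      rw [← ι_pMap G X (ULift.up 0), hφX] at this
      simp only [assoc] at this
      exact (assoc _ _ _).trans ((assoc _ _ _).trans this)
  have hPY : P Y := hP_tri _ hT hPB hPB
  exact hP_iso (asIso φX) hPY

end Gen

theorem statement_0
    -- `T` is a monogenic monoidal triangulated category:
    {C : Type u} [Category.{v} C] [HasZeroObject C] [HasShift C ℤ] [Preadditive C]
    [∀ n : ℤ, (shiftFunctor C n).Additive] [Pretriangulated C] [HasCoproducts.{v} C]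
    [MonoidalCategory C] [SymmetricCategory C]
    [∀ X : C, (tensorLeft X).Additive] [∀ X : C, (tensorRight X).Additive]
    [∀ X : C, (tensorLeft X).CommShift ℤ] [∀ X : C, (tensorRight X).CommShift ℤ]
    [∀ X : C, (tensorLeft X).IsTriangulated] [∀ X : C, (tensorRight X).IsTriangulated]
    (hCtensorL : ∀ (X : C) (ι : Type v), PreservesColimitsOfShape (Discrete ι) (tensorLeft X))
    (hCtensorR : ∀ (X : C) (ι : Type v), PreservesColimitsOfShape (Discrete ι) (tensorRight X))
    (hCunit_small : IsSmallObject (𝟙_ C)) (hCunit_gen : IsWeakGenerator (𝟙_ C))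
    -- `T′` is a monogenic monoidal triangulated category:
    {D : Type u} [Category.{v} D] [HasZeroObject D] [HasShift D ℤ] [Preadditive D]
    [∀ n : ℤ, (shiftFunctor D n).Additive] [Pretriangulated D] [HasCoproducts.{v} D]
    [MonoidalCategory D] [SymmetricCategory D]
    [∀ X : D, (tensorLeft X).Additive] [∀ X : D, (tensorRight X).Additive]
    [∀ X : D, (tensorLeft X).CommShift ℤ] [∀ X : D, (tensorRight X).CommShift ℤ]
    [∀ X : D, (tensorLeft X).IsTriangulated] [∀ X : D, (tensorRight X).IsTriangulated]
    (hDtensorL : ∀ (X : D) (ι : Type v), PreservesColimitsOfShape (Discrete ι) (tensorLeft X))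
    (hDtensorR : ∀ (X : D) (ι : Type v), PreservesColimitsOfShape (Discrete ι) (tensorRight X))
    (hDunit_small : IsSmallObject (𝟙_ D)) (hDunit_gen : IsWeakGenerator (𝟙_ D))
    -- `F` is a triangulated functor preserving arbitrary coproducts:
    (F : C ⥤ D) [F.Additive] [F.CommShift ℤ] [F.IsTriangulated]
    (hF : ∀ ι : Type v, PreservesColimitsOfShape (Discrete ι) F)
    -- the lax monoidal structure on `F`:
    (η : 𝟙_ D ⟶ F.obj (𝟙_ C))
    (φ : ∀ A B : C, F.obj A ⊗ F.obj B ⟶ F.obj (A ⊗ B))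
    (hφ_nat : ∀ {A A' B B' : C} (f : A ⟶ A') (g : B ⟶ B'),
      (F.map f ⊗ₘ F.map g) ≫ φ A' B' = φ A B ≫ F.map (f ⊗ₘ g))
    -- compatibility of `φ` with the shift in the second variable:
    (hφ_shift₂ : ∀ (n : ℤ) (A B : C),
      φ A (B⟦n⟧) ≫ F.map (((tensorLeft A).commShiftIso n).hom.app B) ≫
          (F.commShiftIso n).hom.app (A ⊗ B) =
        (F.obj A ◁ (F.commShiftIso n).hom.app B) ≫
          ((tensorLeft (F.obj A)).commShiftIso n).hom.app (F.obj B) ≫ (φ A B)⟦n⟧')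
    -- compatibility of `φ` with the shift in the first variable:
    (hφ_shift₁ : ∀ (n : ℤ) (A B : C),
      φ (A⟦n⟧) B ≫ F.map (((tensorRight B).commShiftIso n).hom.app A) ≫
          (F.commShiftIso n).hom.app (A ⊗ B) =
        ((F.commShiftIso n).hom.app A ▷ F.obj B) ≫
          ((tensorRight (F.obj B)).commShiftIso n).hom.app (F.obj A) ≫ (φ A B)⟦n⟧')
    -- the coherence diagrams of a lax (symmetric) monoidal functor:
    (hφ_assoc : ∀ A B Z : C,
      (φ A B ⊗ₘ 𝟙 (F.obj Z)) ≫ φ (A ⊗ B) Z ≫ F.map (α_ A B Z).hom =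
        (α_ (F.obj A) (F.obj B) (F.obj Z)).hom ≫ (𝟙 (F.obj A) ⊗ₘ φ B Z) ≫ φ A (B ⊗ Z))
    (hφ_left_unit : ∀ A : C,
      (η ⊗ₘ 𝟙 (F.obj A)) ≫ φ (𝟙_ C) A ≫ F.map (λ_ A).hom = (λ_ (F.obj A)).hom)
    (hφ_right_unit : ∀ A : C,
      (𝟙 (F.obj A) ⊗ₘ η) ≫ φ A (𝟙_ C) ≫ F.map (ρ_ A).hom = (ρ_ (F.obj A)).hom)
    (hφ_braided : ∀ A B : C,
      (β_ (F.obj A) (F.obj B)).hom ≫ φ B A = φ A B ≫ F.map (β_ A B).hom)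
    -- the unit map and the structure map on the units are isomorphisms:
    (hη : IsIso η) (hφ_unit : IsIso (φ (𝟙_ C) (𝟙_ C))) :
    ∀ A B : C, IsIso (φ A B) := by
  intro A B
  -- Step 1: φ A 𝕀 is an isomorphism, for every A (uses only the unit coherence and hη)
  have hunit : ∀ A' : C, IsIso (φ A' (𝟙_ C)) := by
    intro A'
    haveI := hη
    haveI h1 : IsIso (𝟙 (F.obj A') ⊗ₘ η) := inferInstance
    have h2 : (𝟙 (F.obj A') ⊗ₘ η) ≫ φ A' (𝟙_ C) =
        (ρ_ (F.obj A')).hom ≫ inv (F.map (ρ_ A').hom) := by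
      rw [← hφ_right_unit A']
      simp
    haveI h3 : IsIso ((𝟙 (F.obj A') ⊗ₘ η) ≫ φ A' (𝟙_ C)) := by
      rw [h2]; infer_instance
    exact IsIso.of_isIso_comp_left (𝟙 (F.obj A') ⊗ₘ η) (φ A' (𝟙_ C))
  -- Step 2: generation over B
  refine Gen.generation (𝟙_ C) hCunit_small hCunit_gen (fun B => IsIso (φ A B))
    ?_ ?_ ?_ ?_ (hunit A) B
  · -- closed under isomorphism
    intro B₁ B₂ e h
    haveI := h
    haveI : IsIso (F.map (𝟙 A) ⊗ₘ F.map e.hom) := by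
      rw [F.map_id]; infer_instance
    haveI : IsIso (𝟙 A ⊗ₘ e.hom) := by infer_instance
    have hn : φ A B₂ = inv (F.map (𝟙 A) ⊗ₘ F.map e.hom) ≫ φ A B₁ ≫ F.map (𝟙 A ⊗ₘ e.hom) := by
      rw [← hφ_nat (𝟙 A) e.hom, IsIso.inv_hom_id_assoc]
    rw [hn]
    infer_instance
  · -- closed under shifts
    intro B n h
    haveI := h
    have hs := hφ_shift₂ n A B
    have h1 : φ A ((B⟦n⟧ : C)) =
        ((F.obj A ◁ (F.commShiftIso n).hom.app B) ≫
          ((tensorLeft (F.obj A)).commShiftIso n).hom.app (F.obj B) ≫ (φ A B)⟦n⟧') ≫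
          inv ((F.commShiftIso n).hom.app (A ⊗ B)) ≫
          inv (F.map (((tensorLeft A).commShiftIso n).hom.app B)) := by
      rw [← hs]
      simp
    rw [h1]
    infer_instance
  · -- closed under distinguished triangles
    intro T hT h₁ h₂
    haveI := h₁
    haveI := h₂
    have hn' : φ A T.obj₃ ≫ F.map (A ◁ T.mor₃) =
        (F.obj A ◁ F.map T.mor₃) ≫ φ A ((T.obj₁⟦(1 : ℤ)⟧ : C)) := by
      have hn := hφ_nat (𝟙 A) T.mor₃
      simp only [F.map_id, MonoidalCategory.id_tensorHom] at hn
      exact hn.symm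
    have c1 : φ A T.obj₁ ≫ (tensorLeft A ⋙ F).map T.mor₁ =
        (F ⋙ tensorLeft (F.obj A)).map T.mor₁ ≫ φ A T.obj₂ := by
      have hn := hφ_nat (𝟙 A) T.mor₁
      simp only [F.map_id, MonoidalCategory.id_tensorHom] at hn
      exact hn.symm
    have c2 : φ A T.obj₂ ≫ (tensorLeft A ⋙ F).map T.mor₂ =
        (F ⋙ tensorLeft (F.obj A)).map T.mor₂ ≫ φ A T.obj₃ := by
      have hn := hφ_nat (𝟙 A) T.mor₂
      simp only [F.map_id, MonoidalCategory.id_tensorHom] at hn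
      exact hn.symm
    have c3 : φ A T.obj₃ ≫ ((tensorLeft A ⋙ F).map T.mor₃ ≫
          ((tensorLeft A ⋙ F).commShiftIso (1 : ℤ)).hom.app T.obj₁) =
        ((F ⋙ tensorLeft (F.obj A)).map T.mor₃ ≫
          ((F ⋙ tensorLeft (F.obj A)).commShiftIso (1 : ℤ)).hom.app T.obj₁) ≫
          (φ A T.obj₁)⟦(1 : ℤ)⟧' := by
      rw [Functor.commShiftIso_comp_hom_app, Functor.commShiftIso_comp_hom_app]
      have hs := hφ_shift₂ (1 : ℤ) A T.obj₁
      calc φ A T.obj₃ ≫ ((tensorLeft A ⋙ F).map T.mor₃ ≫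
              (F.map (((tensorLeft A).commShiftIso (1 : ℤ)).hom.app T.obj₁) ≫
                (F.commShiftIso (1 : ℤ)).hom.app ((tensorLeft A).obj T.obj₁)))
          = (φ A T.obj₃ ≫ F.map (A ◁ T.mor₃)) ≫
              (F.map (((tensorLeft A).commShiftIso (1 : ℤ)).hom.app T.obj₁) ≫
                (F.commShiftIso (1 : ℤ)).hom.app (A ⊗ T.obj₁)) := by
            simp only [Functor.comp_map, assoc]
            rfl
        _ = ((F.obj A ◁ F.map T.mor₃) ≫ φ A ((T.obj₁⟦(1 : ℤ)⟧ : C))) ≫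
              (F.map (((tensorLeft A).commShiftIso (1 : ℤ)).hom.app T.obj₁) ≫
                (F.commShiftIso (1 : ℤ)).hom.app (A ⊗ T.obj₁)) := by rw [hn']
        _ = (F.obj A ◁ F.map T.mor₃) ≫ (φ A ((T.obj₁⟦(1 : ℤ)⟧ : C)) ≫
              F.map (((tensorLeft A).commShiftIso (1 : ℤ)).hom.app T.obj₁) ≫
                (F.commShiftIso (1 : ℤ)).hom.app (A ⊗ T.obj₁)) := by
            simp only [assoc]
        _ = (F.obj A ◁ F.map T.mor₃) ≫ ((F.obj A ◁ (F.commShiftIso (1 : ℤ)).hom.app T.obj₁) ≫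
              ((tensorLeft (F.obj A)).commShiftIso (1 : ℤ)).hom.app (F.obj T.obj₁) ≫
              (φ A T.obj₁)⟦(1 : ℤ)⟧') := by rw [hs]
        _ = ((F ⋙ tensorLeft (F.obj A)).map T.mor₃ ≫
              ((tensorLeft (F.obj A)).map ((F.commShiftIso (1 : ℤ)).hom.app T.obj₁) ≫
                ((tensorLeft (F.obj A)).commShiftIso (1 : ℤ)).hom.app (F.obj T.obj₁))) ≫
              (φ A T.obj₁)⟦(1 : ℤ)⟧' := by
            simp only [Functor.comp_map, assoc]
            rfl
    let ψ : (F ⋙ tensorLeft (F.obj A)).mapTriangle.obj T ⟶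
        (tensorLeft A ⋙ F).mapTriangle.obj T :=
      CategoryTheory.Pretriangulated.Triangle.homMk _ _
        (φ A T.obj₁) (φ A T.obj₂) (φ A T.obj₃) c1.symm c2.symm (by
          dsimp [Functor.mapTriangle]
          have h := c3.symm
          simp at h
          exact (assoc _ _ _).trans h)
    have hd₁ : (F ⋙ tensorLeft (F.obj A)).mapTriangle.obj T ∈ distTriang D :=
      Functor.map_distinguished _ T hT
    have hd₂ : (tensorLeft A ⋙ F).mapTriangle.obj T ∈ distTriang D :=
      Functor.map_distinguished _ T hT
    have h3 := Pretriangulated.isIso₃_of_isIso₁₂ ψ hd₁ hd₂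
      (show IsIso (φ A T.obj₁) from h₁) (show IsIso (φ A T.obj₂) from h₂)
    exact h3
  · -- closed under coproducts
    intro ι f inst hf
    haveI := hF ι
    haveI := hDtensorL (F.obj A) ι
    haveI := hCtensorL A ι
    haveI : ∀ i, IsIso (φ A (f i)) := hf
    haveI : IsIso (Limits.Sigma.map fun i => φ A (f i)) := inferInstance
    have key : sigmaComparison (F ⋙ tensorLeft (F.obj A)) f ≫ φ A (∐ f) =
        Limits.Sigma.map (fun i => φ A (f i)) ≫ sigmaComparison (tensorLeft A ⋙ F) f := by
      apply colimit.hom_ext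
      rintro ⟨i⟩
      have e1 : Sigma.ι (fun b => (F ⋙ tensorLeft (F.obj A)).obj (f b)) i ≫
          sigmaComparison (F ⋙ tensorLeft (F.obj A)) f =
          (F ⋙ tensorLeft (F.obj A)).map (Sigma.ι f i) := ι_comp_sigmaComparison _ _ _
      have e2 : Sigma.ι (fun b => (tensorLeft A ⋙ F).obj (f b)) i ≫
          sigmaComparison (tensorLeft A ⋙ F) f =
          (tensorLeft A ⋙ F).map (Sigma.ι f i) := ι_comp_sigmaComparison _ _ _
      have e3 : φ A (f i) ≫ (tensorLeft A ⋙ F).map (Sigma.ι f i) =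
          (F ⋙ tensorLeft (F.obj A)).map (Sigma.ι f i) ≫ φ A (∐ f) := by
        have hn := hφ_nat (𝟙 A) (Sigma.ι f i)
        simp only [F.map_id, MonoidalCategory.id_tensorHom] at hn
        exact hn.symm
      show Sigma.ι (fun b => (F ⋙ tensorLeft (F.obj A)).obj (f b)) i ≫
          sigmaComparison (F ⋙ tensorLeft (F.obj A)) f ≫ φ A (∐ f) =
        Sigma.ι (fun b => (F ⋙ tensorLeft (F.obj A)).obj (f b)) i ≫
          Limits.Sigma.map (fun i => φ A (f i)) ≫ sigmaComparison (tensorLeft A ⋙ F) f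
      rw [← assoc, e1, ← e3]
      have e4 : Sigma.ι (fun b => (F ⋙ tensorLeft (F.obj A)).obj (f b)) i ≫
          Limits.Sigma.map (fun i => φ A (f i)) =
          φ A (f i) ≫ Sigma.ι (fun b => (tensorLeft A ⋙ F).obj (f b)) i := by
        simp
      rw [← assoc, e4, assoc, e2]
    have h1 : φ A (∐ f) = inv (sigmaComparison (F ⋙ tensorLeft (F.obj A)) f) ≫
        Limits.Sigma.map (fun i => φ A (f i)) ≫ sigmaComparison (tensorLeft A ⋙ F) f := by
      rw [← key, IsIso.inv_hom_id_assoc]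
    rw [h1]
    infer_instance
end

section
/- Let T and T′ be pretriangulated categories admitting arbitrary (small) coproducts, and let G be a small weak generator of T. Let F₁, F₂ : T → T′ be triangulated functors that preserve arbitrary coproducts, and let τ : F₁ ⟶ F₂ be a natural transformation compatible with the shift (i.e., commuting with the shift-comparison isomorphisms of F₁ and F₂). If the component τ_G is an isomorphism, then τ_X is an isomorphism for every object X of T. -/
/-!
STATEMENT 1: Let `T` and `T′` be pretriangulated categories admitting arbitrary (small)
coproducts, and let `G` be a small weak generator of `T`. Let `F₁, F₂ : T → T′` be
triangulated functors preserving arbitrary coproducts, and let `τ : F₁ ⟶ F₂` be a natural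
transformation compatible with the shift. If `τ_G` is an isomorphism, then `τ_X` is an
isomorphism for every object `X`.
-/

open CategoryTheory Category Limits Pretriangulated

universe v u

open Paper


set_option linter.unusedSectionVars false
set_option maxHeartbeats 1000000
set_option synthInstance.maxHeartbeats 400000

namespace Paper1Proof

open Paper

variable {C : Type u} [Category.{v} C] [Preadditive C]

lemma coproductComparison_of (G' : C) {ι : Type v} (A : ι → C) [HasCoproduct A] (i : ι)
    (u : G' ⟶ A i) :
    coproductComparison G' A (letI := Classical.decEq ι; DirectSum.of _ i u)
      = u ≫ Sigma.ι A i := by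
  letI := Classical.decEq ι
  simp [coproductComparison, DirectSum.toAddMonoid_of]

section Shift
variable [HasShift C ℤ] [∀ n : ℤ, (shiftFunctor C n).Additive]

noncomputable def shiftHomEquiv (G' : C) (n : ℤ) (B : C) : (G'⟦n⟧ ⟶ B) ≃ (G' ⟶ B⟦-n⟧) :=
  (shiftEquiv C n).toAdjunction.homEquiv G' B

lemma shiftHomEquiv_add (G' : C) (n : ℤ) (B : C) (f g : G'⟦n⟧ ⟶ B) :
    shiftHomEquiv G' n B (f + g) = shiftHomEquiv G' n B f + shiftHomEquiv G' n B g := by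
  refine ((shiftEquiv C n).toAdjunction.homEquiv_unit _ _ _).trans ?_
  refine (congrArg _ ((shiftFunctor C (-n)).map_add)).trans ?_
  refine (Preadditive.comp_add _ _ _ _ _ _).trans ?_
  exact congrArg₂ _ ((shiftEquiv C n).toAdjunction.homEquiv_unit _ _ _).symm
    ((shiftEquiv C n).toAdjunction.homEquiv_unit _ _ _).symm

/-- `shiftHomEquiv` as an `AddMonoidHom`. -/
noncomputable def shiftHomAdd (G' : C) (n : ℤ) (B : C) : (G'⟦n⟧ ⟶ B) →+ (G' ⟶ B⟦-n⟧) :=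
  AddMonoidHom.mk' (shiftHomEquiv G' n B) (shiftHomEquiv_add G' n B)

lemma shiftHomEquiv_natural (G' : C) (n : ℤ) {B B' : C} (f : G'⟦n⟧ ⟶ B) (g : B ⟶ B') :
    shiftHomEquiv G' n B' (f ≫ g) = shiftHomEquiv G' n B f ≫ g⟦(-n)⟧' := by
  exact (shiftEquiv C n).toAdjunction.homEquiv_naturality_right f g

variable [HasCoproducts.{v} C]

lemma isSmallObject_shift {G : C} (h : IsSmallObject G) (n : ℤ) : IsSmallObject (G⟦n⟧) := by
  intro ι A _
  letI := Classical.decEq ι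
  set F := shiftFunctor C (-n) with hF
  have hco : HasCoproduct (fun i => F.obj (A i)) := inferInstance
  set e : (∐ fun i => F.obj (A i)) ⟶ F.obj (∐ A) := sigmaComparison F A with he
  have : IsIso e := inferInstance
  set Φ : (G⟦n⟧ ⟶ ∐ A) →+ (G ⟶ ∐ fun i => F.obj (A i)) :=
    (AddMonoidHom.mk' (fun u => u ≫ inv e) (fun _ _ => Preadditive.add_comp _ _ _ _ _ _)).comp
      (shiftHomAdd G n (∐ A)) with hΦ
  have hΦapp : ∀ u, Φ u = shiftHomEquiv G n (∐ A) u ≫ inv e := fun u => rfl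
  have hΦbij : Function.Bijective Φ := by
    constructor
    · intro a b hab
      rw [hΦapp, hΦapp] at hab
      have := (cancel_mono (inv e)).1 hab
      exact (shiftHomEquiv G n (∐ A)).injective this
    · intro w
      refine ⟨(shiftHomEquiv G n (∐ A)).symm (w ≫ e), ?_⟩
      rw [hΦapp, Equiv.apply_symm_apply, assoc, IsIso.hom_inv_id, comp_id]
  set E1 : DirectSum ι (fun i => G⟦n⟧ ⟶ A i) →+ DirectSum ι (fun i => G ⟶ F.obj (A i)) :=
    DirectSum.toAddMonoid (fun i => (DirectSum.of _ i).comp (shiftHomAdd G n (A i))) with hE1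
  set E2 : DirectSum ι (fun i => G ⟶ F.obj (A i)) →+ DirectSum ι (fun i => G⟦n⟧ ⟶ A i) :=
    DirectSum.toAddMonoid (fun i => (DirectSum.of _ i).comp
      (AddMonoidHom.mk' ((shiftHomEquiv G n (A i)).symm)
        (fun a b => by
          apply (shiftHomEquiv G n (A i)).injective
          simp [shiftHomEquiv_add, Equiv.apply_symm_apply]))) with hE2
  have hE21 : ∀ x, E2 (E1 x) = x := by
    intro x
    have : E2.comp E1 = AddMonoidHom.id _ := by
      refine DirectSum.addHom_ext (fun i y => ?_)
      simp [hE1, hE2, DirectSum.toAddMonoid_of, shiftHomAdd]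
    calc E2 (E1 x) = (E2.comp E1) x := rfl
    _ = x := by rw [this]; rfl
  have hE12 : ∀ x, E1 (E2 x) = x := by
    intro x
    have : E1.comp E2 = AddMonoidHom.id _ := by
      refine DirectSum.addHom_ext (fun i y => ?_)
      simp [hE1, hE2, DirectSum.toAddMonoid_of, shiftHomAdd]
    calc E1 (E2 x) = (E1.comp E2) x := rfl
    _ = x := by rw [this]; rfl
  have hE1bij : Function.Bijective E1 :=
    Function.bijective_iff_has_inverse.2 ⟨E2, hE21, hE12⟩
  have hcomm : Φ.comp (coproductComparison (G⟦n⟧) A)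
      = (coproductComparison G (fun i => F.obj (A i))).comp E1 := by
    refine DirectSum.addHom_ext (fun i u => ?_)
    have h1 : (coproductComparison (G⟦n⟧) A) (DirectSum.of _ i u) = u ≫ Sigma.ι A i :=
      coproductComparison_of _ A i u
    have h2 : E1 (DirectSum.of _ i u) = DirectSum.of _ i (shiftHomEquiv G n (A i) u) := by
      simp [hE1, DirectSum.toAddMonoid_of, shiftHomAdd]
    have h3 : (coproductComparison G (fun i => F.obj (A i)))
        (DirectSum.of _ i (shiftHomEquiv G n (A i) u))
        = shiftHomEquiv G n (A i) u ≫ Sigma.ι (fun i => F.obj (A i)) i :=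
      coproductComparison_of _ _ i _
    simp only [AddMonoidHom.comp_apply, h1, h2, h3]
    show shiftHomEquiv G n (∐ A) (u ≫ Sigma.ι A i) ≫ inv e = _
    rw [shiftHomEquiv_natural]
    have h4 : Sigma.ι (fun b => F.obj (A b)) i ≫ e = (Sigma.ι A i)⟦(-n)⟧' :=
      ι_comp_sigmaComparison F A i
    have h5 : (Sigma.ι A i)⟦(-n)⟧' ≫ inv e = Sigma.ι (fun i => F.obj (A i)) i := by
      rw [← h4, assoc, IsIso.hom_inv_id, comp_id]
    rw [assoc, h5]
  have hall : ∀ x, Φ (coproductComparison (G⟦n⟧) A x)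
      = coproductComparison G (fun i => F.obj (A i)) (E1 x) := by
    intro x
    calc Φ (coproductComparison (G⟦n⟧) A x) = (Φ.comp (coproductComparison (G⟦n⟧) A)) x := rfl
    _ = _ := by rw [hcomm]; rfl
  have hfinal : Function.Bijective
      (⇑(coproductComparison G (fun i => F.obj (A i))) ∘ ⇑E1) :=
    (h (fun i => F.obj (A i))).comp hE1bij
  constructor
  · intro a b hab
    apply hfinal.injective
    show coproductComparison G (fun i => F.obj (A i)) (E1 a)
      = coproductComparison G (fun i => F.obj (A i)) (E1 b)
    rw [← hall a, ← hall b, hab]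
  · intro y
    obtain ⟨x, hx⟩ := hfinal.surjective (Φ y)
    refine ⟨x, hΦbij.injective ?_⟩
    rw [hall x]
    exact hx

end Shift

/-! ### The countable tower machinery -/

section Tower

variable (G' : C) [HasCoproducts.{v} C] {X : C}
variable (Y : ℕ → C) (g : ∀ i, Y i ⟶ Y (i+1))

/-- The family over `ULift ℕ`. -/
abbrev fam : ULift.{v} ℕ → C := fun i => Y i.down

/-- `1`-shifted sum map `∐ Y ⟶ ∐ Y`. -/
noncomputable def sMap : ∐ fam Y ⟶ ∐ fam Y :=
  Sigma.desc fun i => g i.down ≫ Sigma.ι (fam Y) ⟨i.down + 1⟩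

/-- `of` with the `Classical` instance baked in. -/
noncomputable abbrev dof (i : ℕ) :
    (G' ⟶ Y i) →+ DirectSum (ULift.{v} ℕ) (fun j => G' ⟶ Y j.down) :=
  @DirectSum.of (ULift.{v} ℕ) (fun j => G' ⟶ Y j.down) _ (Classical.decEq _) ⟨i⟩

/-- The shift endomorphism on the direct sum. -/
noncomputable def sHom :
    DirectSum (ULift.{v} ℕ) (fun j => G' ⟶ Y j.down) →+
      DirectSum (ULift.{v} ℕ) (fun j => G' ⟶ Y j.down) :=
  letI := Classical.decEq (ULift.{v} ℕ)
  DirectSum.toAddMonoid fun i => (dof G' Y (i.down + 1)).comp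
    (AddMonoidHom.mk' (fun u => u ≫ g i.down) fun _ _ => Preadditive.add_comp _ _ _ _ _ _)

lemma sHom_of (i : ℕ) (u : G' ⟶ Y i) :
    sHom G' Y g (dof G' Y i u) = dof G' Y (i + 1) (u ≫ g i) := by
  letI := Classical.decEq (ULift.{v} ℕ)
  simp [sHom, dof, DirectSum.toAddMonoid_of]

lemma cmp_of (i : ℕ) (u : G' ⟶ Y i) :
    coproductComparison G' (fam Y) (dof G' Y i u) = u ≫ Sigma.ι (fam Y) ⟨i⟩ := by
  letI := Classical.decEq (ULift.{v} ℕ)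
  simp [coproductComparison, dof, DirectSum.toAddMonoid_of]

lemma cmp_sMap (z : DirectSum (ULift.{v} ℕ) (fun j => G' ⟶ Y j.down)) :
    coproductComparison G' (fam Y) z ≫ sMap Y g
      = coproductComparison G' (fam Y) (sHom G' Y g z) := by
  letI := Classical.decEq (ULift.{v} ℕ)
  induction z using DirectSum.induction_on with
  | zero => simp
  | of i u =>
      obtain ⟨i⟩ := i
      rw [show (DirectSum.of (fun j : ULift.{v} ℕ => G' ⟶ Y j.down) ⟨i⟩) u = dof G' Y i u from rfl,
        cmp_of, sHom_of, cmp_of, assoc]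
      simp [sMap]
  | add x y hx hy => simp [map_add, Preadditive.add_comp, hx, hy]

lemma sHom_apply_zero (x : DirectSum (ULift.{v} ℕ) (fun j => G' ⟶ Y j.down)) :
    (sHom G' Y g x) ⟨0⟩ = 0 := by
  letI := Classical.decEq (ULift.{v} ℕ)
  induction x using DirectSum.induction_on with
  | zero => simp
  | of i u =>
      obtain ⟨i⟩ := i
      rw [show (DirectSum.of (fun j : ULift.{v} ℕ => G' ⟶ Y j.down) ⟨i⟩) u = dof G' Y i u from rfl,
        sHom_of]
      exact DirectSum.of_eq_of_ne _ _ _ (by simp)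
  | add x y hx hy => simp [map_add, DirectSum.add_apply, hx, hy]

lemma sHom_apply_succ (x : DirectSum (ULift.{v} ℕ) (fun j => G' ⟶ Y j.down)) (j : ℕ) :
    (sHom G' Y g x) ⟨j + 1⟩ = x ⟨j⟩ ≫ g j := by
  letI := Classical.decEq (ULift.{v} ℕ)
  induction x using DirectSum.induction_on with
  | zero => simp
  | of i u =>
      obtain ⟨i⟩ := i
      rw [show (DirectSum.of (fun j : ULift.{v} ℕ => G' ⟶ Y j.down) ⟨i⟩) u = dof G' Y i u from rfl,
        sHom_of]
      by_cases h : i = j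
      · subst h
        rw [DirectSum.of_eq_same, DirectSum.of_eq_same]
      · rw [DirectSum.of_eq_of_ne _ _ _ (by simp [Ne.symm h]), DirectSum.of_eq_of_ne _ _ _ (by simp [Ne.symm h]),
          zero_comp]
  | add x y hx hy => simp [map_add, DirectSum.add_apply, hx, hy, Preadditive.add_comp]

/-- Injectivity of `1 - sMap` on maps from `G'`. -/
lemma tower_inj (hsm : Function.Bijective (coproductComparison G' (fam Y)))
    (u : G' ⟶ ∐ fam Y) (hu : u ≫ (𝟙 _ - sMap Y g) = 0) : u = 0 := by
  obtain ⟨x, rfl⟩ := hsm.surjective u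
  have h1 : coproductComparison G' (fam Y) (x - sHom G' Y g x) = 0 := by
    rw [map_sub, ← cmp_sMap]
    simpa [Preadditive.comp_sub] using hu
  have h2 : x = sHom G' Y g x := by
    have := hsm.injective (h1.trans (map_zero _).symm)
    exact sub_eq_zero.mp this
  have h3 : ∀ j : ℕ, x ⟨j⟩ = 0 := by
    intro j
    induction j with
    | zero => rw [h2]; exact sHom_apply_zero G' Y g x
    | succ j ih => rw [h2, sHom_apply_succ, ih, zero_comp]
  have h4 : x = 0 := by
    refine DFunLike.ext _ _ (fun j => ?_)
    obtain ⟨j⟩ := j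
    rw [h3 j, DirectSum.zero_apply]
  rw [h4, map_zero]

/-- Transition maps in the tower. -/
noncomputable def trans : ∀ (i k : ℕ), Y i ⟶ Y (i + k)
  | _, 0 => 𝟙 _
  | i, (k+1) => trans i k ≫ g (i + k)

lemma trans_comp (f : ∀ i, Y i ⟶ X) (hgf : ∀ i, g i ≫ f (i+1) = f i) (i k : ℕ) :
    trans Y g i k ≫ f (i + k) = f i := by
  induction k with
  | zero => exact id_comp _
  | succ k ih =>
      show (trans Y g i k ≫ g (i + k)) ≫ f ((i + k) + 1) = f i
      rw [assoc, hgf (i+k), ih]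

/-- The difference endomorphism `1 - sHom`. -/
noncomputable def dHom :
    DirectSum (ULift.{v} ℕ) (fun j => G' ⟶ Y j.down) →+
      DirectSum (ULift.{v} ℕ) (fun j => G' ⟶ Y j.down) :=
  AddMonoidHom.id _ - sHom G' Y g

lemma dHom_apply (x) : dHom G' Y g x = x - sHom G' Y g x := rfl

lemma push_mem (i k : ℕ) (v : G' ⟶ Y i) :
    dof G' Y i v - dof G' Y (i + k) (v ≫ trans Y g i k) ∈ (dHom G' Y g).range := by
  induction k with
  | zero =>
      show (dof G' Y i) v - (dof G' Y i) (v ≫ 𝟙 (Y i)) ∈ _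
      rw [comp_id, sub_self]
      exact zero_mem _
  | succ k ih =>
      have hb : dof G' Y (i + k) (v ≫ trans Y g i k)
          - dof G' Y (i + k + 1) ((v ≫ trans Y g i k) ≫ g (i + k))
          ∈ (dHom G' Y g).range := by
        refine ⟨dof G' Y (i + k) (v ≫ trans Y g i k), ?_⟩
        rw [dHom_apply, sHom_of]
      have := add_mem ih hb
      rw [sub_add_sub_cancel] at this
      rw [show v ≫ trans Y g i (k+1) = (v ≫ trans Y g i k) ≫ g (i + k) from by
        rw [show trans Y g i (k+1) = trans Y g i k ≫ g (i+k) from rfl, assoc]]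
      exact this

lemma push_mem' (f : ∀ i, Y i ⟶ X) (hgf : ∀ i, g i ≫ f (i+1) = f i)
    {i N : ℕ} (h : i ≤ N) (v : G' ⟶ Y i) :
    ∃ w : G' ⟶ Y N, (dof G' Y i v - dof G' Y N w ∈ (dHom G' Y g).range)
      ∧ v ≫ f i = w ≫ f N := by
  obtain ⟨k, rfl⟩ := Nat.le.dest h
  exact ⟨v ≫ trans Y g i k, push_mem G' Y g i k v,
    by rw [assoc, trans_comp Y g f hgf]⟩

/-- Total map. -/
noncomputable def tHom (f : ∀ i, Y i ⟶ X) :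
    DirectSum (ULift.{v} ℕ) (fun j => G' ⟶ Y j.down) →+ (G' ⟶ X) :=
  letI := Classical.decEq (ULift.{v} ℕ)
  DirectSum.toAddMonoid fun i =>
    AddMonoidHom.mk' (fun u => u ≫ f i.down) fun _ _ => Preadditive.add_comp _ _ _ _ _ _

lemma tHom_of (f : ∀ i, Y i ⟶ X) (i : ℕ) (u : G' ⟶ Y i) :
    tHom G' Y f (dof G' Y i u) = u ≫ f i := by
  letI := Classical.decEq (ULift.{v} ℕ)
  simp [tHom, dof, DirectSum.toAddMonoid_of]

lemma cmp_desc (f : ∀ i, Y i ⟶ X) (z : DirectSum (ULift.{v} ℕ) (fun j => G' ⟶ Y j.down)) :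
    coproductComparison G' (fam Y) z ≫ Sigma.desc (fun i : ULift.{v} ℕ => f i.down)
      = tHom G' Y f z := by
  letI := Classical.decEq (ULift.{v} ℕ)
  induction z using DirectSum.induction_on with
  | zero => simp
  | of i u =>
      obtain ⟨i⟩ := i
      rw [show (DirectSum.of (fun j : ULift.{v} ℕ => G' ⟶ Y j.down) ⟨i⟩) u = dof G' Y i u from rfl,
        cmp_of, tHom_of, assoc]
      simp
  | add x y hx hy => simp [map_add, Preadditive.add_comp, hx, hy]

lemma approx_level (f : ∀ i, Y i ⟶ X) (hgf : ∀ i, g i ≫ f (i+1) = f i)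
    (x : DirectSum (ULift.{v} ℕ) (fun j => G' ⟶ Y j.down)) :
    ∃ (N : ℕ) (v : G' ⟶ Y N), (x - dof G' Y N v ∈ (dHom G' Y g).range)
      ∧ tHom G' Y f x = v ≫ f N := by
  letI := Classical.decEq (ULift.{v} ℕ)
  induction x using DirectSum.induction_on with
  | zero =>
      refine ⟨0, 0, ?_, by simp⟩
      rw [map_zero, sub_zero]
      exact zero_mem _
  | of i u =>
      obtain ⟨i⟩ := i
      refine ⟨i, u, ?_, ?_⟩
      · rw [show (DirectSum.of (fun j : ULift.{v} ℕ => G' ⟶ Y j.down) ⟨i⟩) u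
          = dof G' Y i u from rfl, sub_self]
        exact zero_mem _
      · rw [show (DirectSum.of (fun j : ULift.{v} ℕ => G' ⟶ Y j.down) ⟨i⟩) u
          = dof G' Y i u from rfl, tHom_of]
  | add x y hx hy =>
      obtain ⟨N₁, v₁, h₁, e₁⟩ := hx
      obtain ⟨N₂, v₂, h₂, e₂⟩ := hy
      obtain ⟨w₁, hw₁, ew₁⟩ := push_mem' G' Y g f hgf (le_max_left N₁ N₂) v₁
      obtain ⟨w₂, hw₂, ew₂⟩ := push_mem' G' Y g f hgf (le_max_right N₁ N₂) v₂
      refine ⟨max N₁ N₂, w₁ + w₂, ?_, ?_⟩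
      · have := add_mem (add_mem h₁ h₂) (add_mem hw₁ hw₂)
        have heq : (x - dof G' Y N₁ v₁) + (y - dof G' Y N₂ v₂)
            + ((dof G' Y N₁ v₁ - dof G' Y (max N₁ N₂) w₁)
              + (dof G' Y N₂ v₂ - dof G' Y (max N₁ N₂) w₂))
            = x + y - dof G' Y (max N₁ N₂) (w₁ + w₂) := by
          rw [map_add]
          abel
        rwa [heq] at this
      · rw [map_add, e₁, e₂, ew₁, ew₂, Preadditive.add_comp]

/-- The key chase: a map killed by `desc f` factors through `1 - sMap`. -/
lemma tower_chase (hsm : Function.Bijective (coproductComparison G' (fam Y)))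
    (f : ∀ i, Y i ⟶ X) (hgf : ∀ i, g i ≫ f (i+1) = f i)
    (hkill : ∀ (i : ℕ) (v : G' ⟶ Y i), v ≫ f i = 0 → v ≫ g i = 0)
    (u : G' ⟶ ∐ fam Y) (hu : u ≫ Sigma.desc (fun i : ULift.{v} ℕ => f i.down) = 0) :
    ∃ u', u = u' ≫ (𝟙 _ - sMap Y g) := by
  obtain ⟨x, rfl⟩ := hsm.surjective u
  have ht : tHom G' Y f x = 0 := by rw [← cmp_desc]; exact hu
  obtain ⟨N, v, hmem, hval⟩ := approx_level G' Y g f hgf x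
  have hv0 : v ≫ f N = 0 := by rw [← hval, ht]
  have hvg : v ≫ g N = 0 := hkill N v hv0
  have hdofmem : dof G' Y N v ∈ (dHom G' Y g).range := by
    refine ⟨dof G' Y N v, ?_⟩
    rw [dHom_apply, sHom_of, hvg, map_zero, sub_zero]
  have hxmem : x ∈ (dHom G' Y g).range := by
    have := add_mem hmem hdofmem
    rwa [sub_add_cancel] at this
  obtain ⟨y, hy⟩ := hxmem
  refine ⟨coproductComparison G' (fam Y) y, ?_⟩
  rw [Preadditive.comp_sub, comp_id, cmp_sMap, ← map_sub, ← dHom_apply, hy]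

end Tower

/-! ### The tower of approximations in a pretriangulated category -/

section Pretriang

variable {C : Type u} [Category.{v} C] [HasZeroObject C] [HasShift C ℤ] [Preadditive C]
  [∀ n : ℤ, (shiftFunctor C n).Additive] [Pretriangulated C] [HasCoproducts.{v} C]
variable (G : C)

/-- Data of one step in the tower. -/
structure NextStep (X Y : C) (f : Y ⟶ X) where
  Z : C
  a : Y ⟶ Z
  f' : Z ⟶ X
  hf : a ≫ f' = f
  κ : Type v
  deg : κ → ℤ
  k : (∐ fun j : κ => G⟦deg j⟧) ⟶ Y
  b : Z ⟶ (∐ fun j : κ => G⟦deg j⟧)⟦(1:ℤ)⟧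
  htri : Triangle.mk k a b ∈ distTriang C
  hkill : ∀ (n : ℤ) (v : G⟦n⟧ ⟶ Y), v ≫ f = 0 → v ≫ a = 0

noncomputable def nextStep (X Y : C) (f : Y ⟶ X) : NextStep G X Y f :=
  let k : (∐ fun j : (n : ℤ) × {v : G⟦n⟧ ⟶ Y // v ≫ f = 0} => G⟦j.1⟧) ⟶ Y :=
    Sigma.desc (fun j => j.2.1)
  let h1 := Pretriangulated.distinguished_cocone_triangle k
  let Z : C := h1.choose
  let a : Y ⟶ Z := h1.choose_spec.choose
  let b : Z ⟶ (∐ fun j : (n : ℤ) × {v : G⟦n⟧ ⟶ Y // v ≫ f = 0} => G⟦j.1⟧)⟦(1:ℤ)⟧ :=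
    h1.choose_spec.choose_spec.choose
  have htri : Triangle.mk k a b ∈ distTriang C := h1.choose_spec.choose_spec.choose_spec
  have hkf : k ≫ f = 0 := by
    ext j
    simp only [k, colimit.ι_desc_assoc, Cofan.mk_pt, Cofan.mk_ι_app, comp_zero]
    exact j.2.2
  let h2 := Triangle.yoneda_exact₂ _ htri f hkf
  { Z := Z, a := a, f' := h2.choose, hf := h2.choose_spec.symm,
    κ := (n : ℤ) × {v : G⟦n⟧ ⟶ Y // v ≫ f = 0}, deg := fun j => j.1, k := k, b := b, htri := htri,
    hkill := by
      intro n v hv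
      have hv' : v = Sigma.ι (fun j : (n : ℤ) × {v : G⟦n⟧ ⟶ Y // v ≫ f = 0} => G⟦j.1⟧)
          ⟨n, v, hv⟩ ≫ k := by
        rw [show k = Sigma.desc
          (fun j : (n : ℤ) × {v : G⟦n⟧ ⟶ Y // v ≫ f = 0} => j.2.1) from rfl, colimit.ι_desc]
        rfl
      rw [hv', assoc]
      have h0 : k ≫ a = 0 := comp_distTriang_mor_zero₁₂ _ htri
      rw [h0, comp_zero] }

/-- The base of the tower. -/
noncomputable def towerBase (X : C) : Σ' (Y : C), Y ⟶ X :=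
  ⟨∐ (fun p : (n : ℤ) × (G⟦n⟧ ⟶ X) => G⟦p.1⟧), Sigma.desc fun p => p.2⟩

/-- The whole tower. -/
noncomputable def towerData (X : C) : ℕ → Σ' (Y : C), Y ⟶ X := fun n =>
  Nat.rec (towerBase G X)
    (fun _ t => ⟨(nextStep G X t.1 t.2).Z, (nextStep G X t.1 t.2).f'⟩) n

end Pretriang

end Paper1Proof

/-! ### Closure properties of the class of objects where `τ` is an isomorphism -/

namespace Paper1Proof

section Closure

variable {C : Type u} [Category.{v} C] [HasZeroObject C] [HasShift C ℤ] [Preadditive C]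
    [∀ n : ℤ, (shiftFunctor C n).Additive] [Pretriangulated C]
    {D : Type u} [Category.{v} D] [HasZeroObject D] [HasShift D ℤ] [Preadditive D]
    [∀ n : ℤ, (shiftFunctor D n).Additive] [Pretriangulated D]
    (F₁ F₂ : C ⥤ D) [F₁.Additive] [F₂.Additive] [F₁.CommShift ℤ] [F₂.CommShift ℤ]
    [F₁.IsTriangulated] [F₂.IsTriangulated]
    (τ : F₁ ⟶ F₂)

lemma iso_shift
    (hτshift : ∀ (n : ℤ) (X : C),
      (F₁.commShiftIso n).hom.app X ≫ (τ.app X)⟦n⟧' =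
        τ.app (X⟦n⟧) ≫ (F₂.commShiftIso n).hom.app X)
    {X : C} (n : ℤ) (h : IsIso (τ.app X)) : IsIso (τ.app (X⟦n⟧)) := by
  haveI := h
  have h1 := hτshift n X
  have h2 : τ.app (X⟦n⟧)
      = (F₁.commShiftIso n).hom.app X ≫ (τ.app X)⟦n⟧'
        ≫ inv ((F₂.commShiftIso n).hom.app X) := by
    rw [← assoc, h1, assoc, IsIso.hom_inv_id, comp_id]
  rw [h2]
  infer_instance

lemma iso_coprod [HasCoproducts.{v} C] [HasCoproducts.{v} D]
    (hF₁ : ∀ ι : Type v, PreservesColimitsOfShape (Discrete ι) F₁)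
    (hF₂ : ∀ ι : Type v, PreservesColimitsOfShape (Discrete ι) F₂)
    {ι : Type v} (A : ι → C) [HasCoproduct A] (h : ∀ i, IsIso (τ.app (A i))) :
    IsIso (τ.app (∐ A)) := by
  haveI := hF₁ ι
  haveI := hF₂ ι
  haveI := h
  haveI c₁ : IsIso (sigmaComparison F₁ A) := inferInstance
  haveI c₂ : IsIso (sigmaComparison F₂ A) := inferInstance
  have hsq : sigmaComparison F₁ A ≫ τ.app (∐ A)
      = Limits.Sigma.map (fun i => τ.app (A i)) ≫ sigmaComparison F₂ A := by
    ext j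
    simp
  haveI hmap : IsIso (Limits.Sigma.map (fun i => τ.app (A i))) := inferInstance
  have heq : τ.app (∐ A)
      = inv (sigmaComparison F₁ A) ≫ Limits.Sigma.map (fun i => τ.app (A i))
        ≫ sigmaComparison F₂ A := by
    rw [← hsq, IsIso.inv_hom_id_assoc]
  rw [heq]
  infer_instance

lemma iso_cone
    (hτshift : ∀ (n : ℤ) (X : C),
      (F₁.commShiftIso n).hom.app X ≫ (τ.app X)⟦n⟧' =
        τ.app (X⟦n⟧) ≫ (F₂.commShiftIso n).hom.app X)
    (T : Triangle C) (hT : T ∈ distTriang C)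
    (h₁ : IsIso (τ.app T.obj₁)) (h₂ : IsIso (τ.app T.obj₂)) : IsIso (τ.app T.obj₃) := by
  let φ : F₁.mapTriangle.obj T ⟶ F₂.mapTriangle.obj T :=
    { hom₁ := τ.app T.obj₁
      hom₂ := τ.app T.obj₂
      hom₃ := τ.app T.obj₃
      comm₁ := τ.naturality T.mor₁
      comm₂ := τ.naturality T.mor₂
      comm₃ := by
        show (F₁.map T.mor₃ ≫ (F₁.commShiftIso (1:ℤ)).hom.app T.obj₁) ≫ (τ.app T.obj₁)⟦(1:ℤ)⟧'
          = τ.app T.obj₃ ≫ (F₂.map T.mor₃ ≫ (F₂.commShiftIso (1:ℤ)).hom.app T.obj₁)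
        rw [assoc, hτshift 1 T.obj₁, ← assoc, τ.naturality T.mor₃, assoc] }
  exact isIso₃_of_isIso₁₂ φ (F₁.map_distinguished T hT) (F₂.map_distinguished T hT) h₁ h₂

end Closure

end Paper1Proof

theorem statement_1
    {C : Type u} [Category.{v} C] [HasZeroObject C] [HasShift C ℤ] [Preadditive C]
    [∀ n : ℤ, (shiftFunctor C n).Additive] [Pretriangulated C] [HasCoproducts.{v} C]
    {D : Type u} [Category.{v} D] [HasZeroObject D] [HasShift D ℤ] [Preadditive D]
    [∀ n : ℤ, (shiftFunctor D n).Additive] [Pretriangulated D] [HasCoproducts.{v} D]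
    (F₁ F₂ : C ⥤ D) [F₁.Additive] [F₂.Additive] [F₁.CommShift ℤ] [F₂.CommShift ℤ]
    [F₁.IsTriangulated] [F₂.IsTriangulated]
    (hF₁ : ∀ ι : Type v, PreservesColimitsOfShape (Discrete ι) F₁)
    (hF₂ : ∀ ι : Type v, PreservesColimitsOfShape (Discrete ι) F₂)
    (G : C) (hGsmall : IsSmallObject G) (hGgen : IsWeakGenerator G)
    (τ : F₁ ⟶ F₂)
    (hτshift : ∀ (n : ℤ) (X : C),
      (F₁.commShiftIso n).hom.app X ≫ (τ.app X)⟦n⟧' =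
        τ.app (X⟦n⟧) ≫ (F₂.commShiftIso n).hom.app X)
    (hτG : IsIso (τ.app G)) :
    ∀ X : C, IsIso (τ.app X) := by
  intro X
  classical
  -- the tower of approximations of `X`
  set Yt : ℕ → C := fun i => (Paper1Proof.towerData G X i).1 with hYt
  set ft : ∀ i, Yt i ⟶ X := fun i => (Paper1Proof.towerData G X i).2 with hft
  let ns : ∀ i, Paper1Proof.NextStep G X (Yt i) (ft i) :=
    fun i => Paper1Proof.nextStep G X (Yt i) (ft i)
  let gt : ∀ i, Yt i ⟶ Yt (i+1) := fun i => (ns i).a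
  have hgf : ∀ i, gt i ≫ ft (i+1) = ft i := fun i => (ns i).hf
  have hkill : ∀ (n : ℤ) (i : ℕ) (v : G⟦n⟧ ⟶ Yt i), v ≫ ft i = 0 → v ≫ gt i = 0 :=
    fun n i v h => (ns i).hkill n v h
  -- the homotopy colimit triangle
  set s : ∐ Paper1Proof.fam Yt ⟶ ∐ Paper1Proof.fam Yt := Paper1Proof.sMap Yt gt with hs
  obtain ⟨Z, c, hcone, htri⟩ :=
    Pretriangulated.distinguished_cocone_triangle (𝟙 (∐ Paper1Proof.fam Yt) - s)
  have hcomp : ∀ j : ℕ, Sigma.ι (Paper1Proof.fam Yt) ⟨j⟩ ≫ s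
      = gt j ≫ Sigma.ι (Paper1Proof.fam Yt) ⟨j+1⟩ := by
    intro j
    rw [hs, Paper1Proof.sMap]
    exact colimit.ι_desc _ _
  have hcompd : ∀ j : ℕ, Sigma.ι (Paper1Proof.fam Yt) ⟨j⟩
      ≫ Sigma.desc (fun i : ULift.{v} ℕ => ft i.down) = ft j := fun j => colimit.ι_desc _ _
  have hdesc0 : (𝟙 (∐ Paper1Proof.fam Yt) - s)
      ≫ Sigma.desc (fun i : ULift.{v} ℕ => ft i.down) = 0 := by
    ext j
    obtain ⟨j⟩ := j
    rw [comp_zero, ← assoc, Preadditive.comp_sub, comp_id, Preadditive.sub_comp, hcompd j,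
      hcomp j, assoc, hcompd (j+1), hgf j, sub_self]
  obtain ⟨finf : Z ⟶ X, hfinf⟩ := Triangle.yoneda_exact₂ _ htri
    (Sigma.desc (fun i : ULift.{v} ℕ => ft i.down)) hdesc0
  have hfinf' : Sigma.desc (fun i : ULift.{v} ℕ => ft i.down) = c ≫ finf := hfinf
  -- `Hom(G⟦n⟧, -)` applied to `finf` is bijective
  have hbij : ∀ n : ℤ, Function.Bijective (fun w : G⟦n⟧ ⟶ Z => w ≫ finf) := by
    intro n
    have hsmn := Paper1Proof.isSmallObject_shift hGsmall n
    constructor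
    · intro a b hab
      have hab' : a ≫ finf = b ≫ finf := hab
      have hw : (a - b) ≫ finf = 0 := by
        rw [Preadditive.sub_comp, hab', sub_self]
      set w : G⟦n⟧ ⟶ Z := a - b with hwdef
      have h31 : hcone ≫ (𝟙 (∐ Paper1Proof.fam Yt) - s)⟦(1:ℤ)⟧' = 0 :=
        comp_distTriang_mor_zero₃₁ _ htri
      set e : (∐ Paper1Proof.fam (fun i => (Yt i)⟦(1:ℤ)⟧)) ⟶ (∐ Paper1Proof.fam Yt)⟦(1:ℤ)⟧ :=
        sigmaComparison (shiftFunctor C (1:ℤ)) (Paper1Proof.fam Yt) with he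
      haveI : IsIso e := inferInstance
      set s₁ : ∐ Paper1Proof.fam (fun i => (Yt i)⟦(1:ℤ)⟧)
          ⟶ ∐ Paper1Proof.fam (fun i => (Yt i)⟦(1:ℤ)⟧) :=
        Paper1Proof.sMap (fun i => (Yt i)⟦(1:ℤ)⟧) (fun i => (gt i)⟦(1:ℤ)⟧') with hs₁
      have hι1 : ∀ j : ℕ, Sigma.ι (Paper1Proof.fam (fun i => (Yt i)⟦(1:ℤ)⟧)) ⟨j⟩ ≫ s₁
          = (gt j)⟦(1:ℤ)⟧' ≫ Sigma.ι (Paper1Proof.fam (fun i => (Yt i)⟦(1:ℤ)⟧)) ⟨j+1⟩ := by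
        intro j
        rw [hs₁, Paper1Proof.sMap]
        exact colimit.ι_desc _ _
      have hι2 : ∀ j : ℕ, Sigma.ι (Paper1Proof.fam (fun i => (Yt i)⟦(1:ℤ)⟧)) ⟨j⟩ ≫ e
          = (Sigma.ι (Paper1Proof.fam Yt) ⟨j⟩)⟦(1:ℤ)⟧' := by
        intro j
        exact ι_comp_sigmaComparison (shiftFunctor C (1:ℤ)) (Paper1Proof.fam Yt) ⟨j⟩
      have hconj : s₁ ≫ e = e ≫ s⟦(1:ℤ)⟧' := by
        ext j
        obtain ⟨j⟩ := j
        rw [← assoc, hι1 j, assoc, hι2 (j+1), ← assoc, hι2 j, ← Functor.map_comp,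
          ← Functor.map_comp, hcomp j]
      have hconj2 : (𝟙 _ - s₁) ≫ e = e ≫ (𝟙 _ - s)⟦(1:ℤ)⟧' := by
        rw [CategoryTheory.Functor.map_sub, CategoryTheory.Functor.map_id, Preadditive.comp_sub,
          comp_id, Preadditive.sub_comp, id_comp, hconj]
      set u₁ : G⟦n⟧ ⟶ ∐ Paper1Proof.fam (fun i => (Yt i)⟦(1:ℤ)⟧) := (w ≫ hcone) ≫ inv e
        with hu₁def
      have hu₁ : u₁ ≫ (𝟙 _ - s₁) = 0 := by
        have hinv : inv e ≫ (𝟙 _ - s₁) = (𝟙 (∐ Paper1Proof.fam Yt) - s)⟦(1:ℤ)⟧' ≫ inv e := by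
          rw [IsIso.inv_comp_eq, ← assoc, ← hconj2, assoc, IsIso.hom_inv_id, comp_id]
        rw [hu₁def, assoc, hinv, ← assoc,
          Category.assoc w hcone ((𝟙 (∐ Paper1Proof.fam Yt) - s)⟦(1:ℤ)⟧'), h31, comp_zero,
          zero_comp]
      have hu₁0 : u₁ = 0 :=
        Paper1Proof.tower_inj (G⟦n⟧) (fun i => (Yt i)⟦(1:ℤ)⟧) (fun i => (gt i)⟦(1:ℤ)⟧')
          (hsmn _) u₁ hu₁
      have hwh : w ≫ hcone = 0 := by
        have h6 : u₁ ≫ e = w ≫ hcone := by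
          rw [hu₁def, assoc, IsIso.inv_hom_id, comp_id]
        rw [← h6, hu₁0, zero_comp]
      obtain ⟨u : G⟦n⟧ ⟶ ∐ Paper1Proof.fam Yt, hu⟩ := Triangle.coyoneda_exact₃ _ htri w hwh
      have hu'' : w = u ≫ c := hu
      have hu0 : u ≫ Sigma.desc (fun i : ULift.{v} ℕ => ft i.down) = 0 := by
        rw [hfinf', ← assoc, ← hu'', hw]
      obtain ⟨u', hu'⟩ := Paper1Proof.tower_chase (G⟦n⟧) Yt gt (hsmn _) ft hgf
        (fun i v hv => hkill n i v hv) u hu0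
      have hw0 : w = 0 := by
        rw [hu'', hu', ← hs, assoc]
        have hzero : (𝟙 (∐ Paper1Proof.fam Yt) - s) ≫ c = 0 :=
          comp_distTriang_mor_zero₁₂ _ htri
        rw [hzero, comp_zero]
      exact sub_eq_zero.mp hw0
    · intro v
      refine ⟨(Sigma.ι (fun p : (n : ℤ) × (G⟦n⟧ ⟶ X) => G⟦p.1⟧) ⟨n, v⟩
        ≫ Sigma.ι (Paper1Proof.fam Yt) ⟨0⟩) ≫ c, ?_⟩
      show ((Sigma.ι (fun p : (n : ℤ) × (G⟦n⟧ ⟶ X) => G⟦p.1⟧) ⟨n, v⟩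
        ≫ Sigma.ι (Paper1Proof.fam Yt) ⟨0⟩) ≫ c) ≫ finf = v
      rw [assoc, ← hfinf']
      exact (assoc _ _ _).trans ((congrArg _ (colimit.ι_desc _ _)).trans (colimit.ι_desc _ _))
  have hiso : IsIso finf := (hGgen finf).2 hbij
  haveI := hiso
  have hτYt : ∀ i, IsIso (τ.app (Yt i)) := by
    intro i
    induction i with
    | zero =>
        exact Paper1Proof.iso_coprod F₁ F₂ τ hF₁ hF₂
          (fun p : (n : ℤ) × (G⟦n⟧ ⟶ X) => G⟦p.1⟧)
          (fun p => Paper1Proof.iso_shift F₁ F₂ τ hτshift p.1 hτG)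
    | succ i ih =>
        have h1 := Paper1Proof.iso_coprod F₁ F₂ τ hF₁ hF₂
          (fun j : (ns i).κ => G⟦(ns i).deg j⟧)
          (fun j => Paper1Proof.iso_shift F₁ F₂ τ hτshift _ hτG)
        exact Paper1Proof.iso_cone F₁ F₂ τ hτshift _ ((ns i).htri) h1 ih
  have hτco : IsIso (τ.app (∐ Paper1Proof.fam Yt)) :=
    Paper1Proof.iso_coprod F₁ F₂ τ hF₁ hF₂ (Paper1Proof.fam Yt) (fun j => hτYt j.down)
  have hτZ : IsIso (τ.app Z) :=
    Paper1Proof.iso_cone F₁ F₂ τ hτshift _ htri hτco hτco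
  haveI := hτZ
  have hnat' : F₁.map finf ≫ τ.app X = τ.app Z ≫ F₂.map finf := τ.naturality finf
  have hfin : τ.app X = inv (F₁.map finf) ≫ τ.app Z ≫ F₂.map finf := by
    rw [← hnat', IsIso.inv_hom_id_assoc]
  rw [hfin]
  infer_instance
end

section
/- Let T be a pretriangulated category admitting arbitrary (small) coproducts, and let ∧ and ∧′ be two symmetric monoidal structures on T, each with the same unit 𝕀, each bi-exact (for every X the functors X ∧ − , − ∧ X, X ∧′ − and − ∧′ X are triangulated and preserve arbitrary coproducts), and suppose 𝕀 is a small weak generator of T. Suppose the identity functor of T is lax monoidal from (T, ∧) to (T, ∧′), with unit morphism η : 𝕀 → 𝕀 and natural comparison maps φ_{A,B} : A ∧′ B → A ∧ B compatible with the shift in each variable. If η is an isomorphism and φ_{𝕀,𝕀} : 𝕀 ∧′ 𝕀 → 𝕀 ∧ 𝕀 is an isomorphism, then φ_{A,B} is an isomorphism for all objects A and B; hence the two monoidal structures are monoidally equivalent via the identity functor. -/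
/-!
STATEMENT 2: Let `T` be a pretriangulated category with arbitrary coproducts and let `∧`
(`M`) and `∧′` (`M'`) be two bi-exact symmetric monoidal structures on `T` with the same
unit `𝕀`, which is a small weak generator.  Suppose the identity functor is lax monoidal
from `(T, ∧)` to `(T, ∧′)`, with unit morphism `η : 𝕀 ⟶ 𝕀` and natural comparison maps
`φ A B : A ∧′ B ⟶ A ∧ B` compatible with the shift in each variable.  If `η` and
`φ 𝕀 𝕀` are isomorphisms then every `φ A B` is an isomorphism, so the two monoidal
structures are monoidally equivalent via the identity functor.
-/

open CategoryTheory Category Limits Pretriangulated MonoidalCategory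

universe v u

open Paper

namespace PaperAux

variable {C : Type u} [Category.{v} C]

lemma coproductComparison_of [Preadditive C] {ι : Type v} [inst : DecidableEq ι] (G : C)
    (A : ι → C) [HasCoproduct A] (i : ι) (g : G ⟶ A i) :
    coproductComparison G A (DirectSum.of (fun i => G ⟶ A i) i g) = g ≫ Sigma.ι A i := by
  have : inst = Classical.decEq ι := Subsingleton.elim _ _
  subst this
  letI := Classical.decEq ι
  exact DirectSum.toAddMonoid_of _ _ _

lemma bij_postcomp {X Y Z : C} (w : Y ⟶ Z) [IsIso w] :
    Function.Bijective (fun f : X ⟶ Y => f ≫ w) :=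
  ⟨fun a b h => by simpa using congrArg (· ≫ CategoryTheory.inv w) h,
   fun y => ⟨y ≫ CategoryTheory.inv w, by simp⟩⟩

lemma isSmallObject_shift [Preadditive C] [HasShift C ℤ] [∀ n : ℤ, (shiftFunctor C n).Additive]
    [HasCoproducts.{v} C] {G : C} (hG : IsSmallObject G) (k : ℤ) :
    IsSmallObject (G⟦k⟧) := by
  intro ι A _
  letI := Classical.decEq ι
  let E := shiftEquiv C k
  haveI : E.inverse.Additive := (inferInstance : (shiftFunctor C (-k)).Additive)
  haveI : E.functor.Additive := (inferInstance : (shiftFunctor C k).Additive)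
  let adj := E.toAdjunction
  have eadd : ∀ (Y : C) (f g : G⟦k⟧ ⟶ Y),
      adj.homEquiv G Y (f + g) = adj.homEquiv G Y f + adj.homEquiv G Y g := by
    intro Y f g
    exact adj.homAddEquiv_add G Y f g
  have esadd : ∀ (Y : C) (f g : G ⟶ E.inverse.obj Y),
      (adj.homEquiv G Y).symm (f + g) = (adj.homEquiv G Y).symm f + (adj.homEquiv G Y).symm g := by
    intro Y f g
    exact adj.homAddEquiv_symm_add G Y f g
  let eH : ∀ Y : C, (G⟦k⟧ ⟶ Y) →+ (G ⟶ E.inverse.obj Y) :=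
    fun Y => AddMonoidHom.mk' (adj.homEquiv G Y) (eadd Y)
  let eS : ∀ Y : C, (G ⟶ E.inverse.obj Y) →+ (G⟦k⟧ ⟶ Y) :=
    fun Y => AddMonoidHom.mk' (adj.homEquiv G Y).symm (esadd Y)
  let m : DirectSum ι (fun i => G⟦k⟧ ⟶ A i) →+ DirectSum ι (fun i => G ⟶ E.inverse.obj (A i)) :=
    DirectSum.toAddMonoid fun i => (DirectSum.of (fun i => G ⟶ E.inverse.obj (A i)) i).comp (eH (A i))
  let m' : DirectSum ι (fun i => G ⟶ E.inverse.obj (A i)) →+ DirectSum ι (fun i => G⟦k⟧ ⟶ A i) :=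
    DirectSum.toAddMonoid fun i => (DirectSum.of (fun i => G⟦k⟧ ⟶ A i) i).comp (eS (A i))
  have hm : Function.Bijective m := by
    have h1 : m'.comp m = AddMonoidHom.id _ := DirectSum.addHom_ext fun i g => by
      simp [m, m', eH, eS]
      congr 1; exact (adj.homEquiv G (A i)).symm_apply_apply g
    have h2 : m.comp m' = AddMonoidHom.id _ := DirectSum.addHom_ext fun i g => by
      simp [m, m', eH, eS]
      congr 1; exact (adj.homEquiv G (A i)).apply_symm_apply g
    exact Function.bijective_iff_has_inverse.2
      ⟨m', fun x => DFunLike.congr_fun h1 x, fun x => DFunLike.congr_fun h2 x⟩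
  haveI : HasCoproduct (fun i => E.inverse.obj (A i)) := inferInstance
  let w : (∐ fun i => E.inverse.obj (A i)) ⟶ E.inverse.obj (∐ A) := sigmaComparison E.inverse A
  haveI : IsIso w := by unfold w; infer_instance
  let pw : (G ⟶ ∐ fun i => E.inverse.obj (A i)) →+ (G ⟶ E.inverse.obj (∐ A)) :=
    AddMonoidHom.mk' (fun f => f ≫ w) fun _ _ => Preadditive.add_comp _ _ _ _ _ _
  have heq : coproductComparison (G⟦k⟧) A =
      (eS (∐ A)).comp (pw.comp ((coproductComparison G (fun i => E.inverse.obj (A i))).comp m)) := by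
    apply DirectSum.addHom_ext
    intro i g
    rw [coproductComparison_of]
    simp only [AddMonoidHom.comp_apply, m, DirectSum.toAddMonoid_of, AddMonoidHom.mk'_apply,
      AddMonoidHom.coe_comp, Function.comp_apply]
    rw [coproductComparison_of]
    simp only [eH, eS, pw, AddMonoidHom.mk'_apply]
    rw [Category.assoc, ι_comp_sigmaComparison]
    show g ≫ Sigma.ι A i = (adj.homEquiv G (∐ A)).symm (adj.homEquiv G (A i) g ≫ E.inverse.map (Sigma.ι A i))
    rw [← adj.homEquiv_naturality_right g (Sigma.ι A i), Equiv.symm_apply_apply]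
    rfl
  rw [heq]
  simp only [AddMonoidHom.coe_comp]
  exact ((adj.homEquiv G (∐ A)).symm.bijective).comp
    ((bij_postcomp w).comp (((hG (fun i => E.inverse.obj (A i)))).comp hm))


section NatTransClosure

variable {F' F : C ⥤ C}

lemma isIso_app_of_iso (ψ : F' ⟶ F) {X Y : C} (e : X ≅ Y) (h : IsIso (ψ.app X)) :
    IsIso (ψ.app Y) := by
  have : ψ.app Y = F'.map e.inv ≫ ψ.app X ≫ F.map e.hom := by
    rw [← ψ.naturality e.hom, ← Functor.map_comp_assoc, e.inv_hom_id,
      CategoryTheory.Functor.map_id, id_comp]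
  rw [this]
  haveI := h
  infer_instance

lemma isIso_app_shift [HasShift C ℤ] [F'.CommShift ℤ] [F.CommShift ℤ] (ψ : F' ⟶ F)
    (hψ : ∀ (n : ℤ) (X : C), ψ.app (X⟦n⟧) ≫ (F.commShiftIso n).hom.app X
      = (F'.commShiftIso n).hom.app X ≫ (ψ.app X)⟦n⟧')
    (X : C) (n : ℤ) (h : IsIso (ψ.app X)) : IsIso (ψ.app (X⟦n⟧)) := by
  have : ψ.app (X⟦n⟧)
      = (F'.commShiftIso n).hom.app X ≫ (ψ.app X)⟦n⟧' ≫ (F.commShiftIso n).inv.app X := by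
    rw [← Category.assoc, ← hψ n X, Category.assoc, Iso.hom_inv_id_app]
    exact (Category.comp_id _).symm
  rw [this]
  haveI := h
  infer_instance

lemma isIso_app_coproduct [HasCoproducts.{v} C] (ψ : F' ⟶ F) {ι : Type v} (B : ι → C)
    (hpres' : PreservesColimitsOfShape (Discrete ι) F')
    (hpres : PreservesColimitsOfShape (Discrete ι) F)
    (h : ∀ i, IsIso (ψ.app (B i))) : IsIso (ψ.app (∐ B)) := by
  haveI := hpres'; haveI := hpres
  haveI := h
  have sq : sigmaComparison F' B ≫ ψ.app (∐ B) =
      Limits.Sigma.map (fun i => ψ.app (B i)) ≫ sigmaComparison F B := by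
    ext i
    rw [ι_comp_sigmaComparison_assoc, ψ.naturality, ← ι_comp_sigmaComparison]
    simp
  have : ψ.app (∐ B) = CategoryTheory.inv (sigmaComparison F' B) ≫
      Limits.Sigma.map (fun i => ψ.app (B i)) ≫ sigmaComparison F B := by
    rw [← sq, IsIso.inv_hom_id_assoc]
  rw [this]
  infer_instance

lemma isIso_app_of_distTriang [HasZeroObject C] [HasShift C ℤ] [Preadditive C]
    [∀ n : ℤ, (shiftFunctor C n).Additive] [Pretriangulated C]
    [F'.CommShift ℤ] [F.CommShift ℤ]
    (hF' : F'.IsTriangulated) (hF : F.IsTriangulated) (ψ : F' ⟶ F)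
    (hψ : ∀ (X : C), ψ.app (X⟦(1:ℤ)⟧) ≫ (F.commShiftIso (1:ℤ)).hom.app X =
      (F'.commShiftIso (1:ℤ)).hom.app X ≫ (ψ.app X)⟦(1:ℤ)⟧')
    {T : Triangle C} (hT : T ∈ distTriang C)
    (h₁ : IsIso (ψ.app T.obj₁)) (h₂ : IsIso (ψ.app T.obj₂)) : IsIso (ψ.app T.obj₃) := by
  haveI := hF'; haveI := hF
  let mφ : F'.mapTriangle.obj T ⟶ F.mapTriangle.obj T :=
    { hom₁ := ψ.app T.obj₁
      hom₂ := ψ.app T.obj₂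
      hom₃ := ψ.app T.obj₃
      comm₁ := by exact ψ.naturality T.mor₁
      comm₂ := by exact ψ.naturality T.mor₂
      comm₃ := by
        show (F'.map T.mor₃ ≫ (F'.commShiftIso (1:ℤ)).hom.app T.obj₁) ≫ (ψ.app T.obj₁)⟦(1:ℤ)⟧' =
          ψ.app T.obj₃ ≫ (F.map T.mor₃ ≫ (F.commShiftIso (1:ℤ)).hom.app T.obj₁)
        rw [Category.assoc, ← hψ T.obj₁, ← Category.assoc, ψ.naturality T.mor₃,
          Category.assoc] }
  exact isIso₃_of_isIso₁₂ mφ (F'.map_distinguished T hT) (F.map_distinguished T hT) h₁ h₂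

end NatTransClosure

def chainRec {σ : Sort*} (f : σ → σ) (s0 : σ) : ℕ → σ
  | 0 => s0
  | n+1 => f (chainRec f s0 n)

def towerTrans (X : ℕ → C) (j : ∀ i, X i ⟶ X (i+1)) (i : ℕ) : ∀ k, X i ⟶ X (i + k)
  | 0 => 𝟙 _
  | k+1 => towerTrans X j i k ≫ j (i+k)

lemma towerTrans_comp (X : ℕ → C) (j : ∀ i, X i ⟶ X (i+1)) {Q : C} (e : ∀ i, X i ⟶ Q)
    (he : ∀ i, e i = j i ≫ e (i+1)) (i k : ℕ) :
    towerTrans X j i k ≫ e (i + k) = e i := by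
  induction k with
  | zero => simp [towerTrans]
  | succ k ih =>
      rw [show towerTrans X j i (k+1) = towerTrans X j i k ≫ j (i+k) from rfl,
        Category.assoc]
      show towerTrans X j i k ≫ j (i+k) ≫ e ((i+k)+1) = e i
      rw [← he (i+k), ih]

lemma tower_factor [Preadditive C] [HasCoproducts.{v} C]
    {H : C} (X : ℕ → C) (j : ∀ i, X i ⟶ X (i+1)) {Q : C}
    (q : (∐ fun i : ULift.{v} ℕ => X i.down) ⟶ Q)
    (hq : ∀ i : ℕ, Sigma.ι (fun i : ULift.{v} ℕ => X i.down) ⟨i⟩ ≫ q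
      = j i ≫ (Sigma.ι (fun i : ULift.{v} ℕ => X i.down) ⟨i+1⟩ ≫ q))
    (x : DirectSum (ULift.{v} ℕ) (fun i => H ⟶ X i.down)) :
    ∃ (N : ℕ) (g : H ⟶ X N),
      coproductComparison H (fun i : ULift.{v} ℕ => X i.down) x ≫ q
        = g ≫ (Sigma.ι (fun i : ULift.{v} ℕ => X i.down) ⟨N⟩ ≫ q) := by
  letI := Classical.decEq (ULift.{v} ℕ)
  have up : ∀ (N M : ℕ), N ≤ M → ∀ g : H ⟶ X N,
      ∃ g' : H ⟶ X M,
        g ≫ (Sigma.ι (fun i : ULift.{v} ℕ => X i.down) ⟨N⟩ ≫ q)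
          = g' ≫ (Sigma.ι (fun i : ULift.{v} ℕ => X i.down) ⟨M⟩ ≫ q) := by
    intro N M hNM g
    obtain ⟨k, rfl⟩ := Nat.le.dest hNM
    exact ⟨g ≫ towerTrans X j N k, by
      rw [Category.assoc, towerTrans_comp X j (fun i => Sigma.ι
        (fun i : ULift.{v} ℕ => X i.down) ⟨i⟩ ≫ q) hq]⟩
  induction x using DirectSum.induction_on with
  | zero => exact ⟨0, 0, by simp⟩
  | of i g =>
      exact ⟨i.down, g, by rw [coproductComparison_of, Category.assoc]⟩
  | add x y hx hy =>
      obtain ⟨N₁, g₁, h₁⟩ := hx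
      obtain ⟨N₂, g₂, h₂⟩ := hy
      obtain ⟨g₁', hg₁⟩ := up N₁ (max N₁ N₂) (le_max_left _ _) g₁
      obtain ⟨g₂', hg₂⟩ := up N₂ (max N₁ N₂) (le_max_right _ _) g₂
      refine ⟨max N₁ N₂, g₁' + g₂', ?_⟩
      rw [map_add, Preadditive.add_comp, h₁, h₂, hg₁, hg₂, Preadditive.add_comp]

lemma tower_comp_injective [Preadditive C] [HasCoproducts.{v} C]
    {H : C} (hH : IsSmallObject H) (X : ℕ → C) (j : ∀ i, X i ⟶ X (i+1))
    (u : H ⟶ ∐ fun i : ULift.{v} ℕ => X i.down)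
    (hu : u = u ≫ Sigma.desc (fun i => j i.down ≫ Sigma.ι
      (fun i : ULift.{v} ℕ => X i.down) ⟨i.down+1⟩)) :
    u = 0 := by
  letI := Classical.decEq (ULift.{v} ℕ)
  obtain ⟨x, rfl⟩ := (hH (fun i : ULift.{v} ℕ => X i.down)).2 u
  let σ : DirectSum (ULift.{v} ℕ) (fun i => H ⟶ X i.down)
      →+ DirectSum (ULift.{v} ℕ) (fun i => H ⟶ X i.down) :=
    DirectSum.toAddMonoid fun i =>
      (DirectSum.of (fun i : ULift.{v} ℕ => H ⟶ X i.down) ⟨i.down+1⟩).comp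
        (AddMonoidHom.mk' (fun g => g ≫ j i.down)
          fun _ _ => Preadditive.add_comp _ _ _ _ _ _)
  have hσ : ∀ y, coproductComparison H (fun i : ULift.{v} ℕ => X i.down) (σ y)
      = coproductComparison H (fun i : ULift.{v} ℕ => X i.down) y
          ≫ Sigma.desc (fun i => j i.down ≫ Sigma.ι
            (fun i : ULift.{v} ℕ => X i.down) ⟨i.down+1⟩) := by
    have hAB : (coproductComparison H (fun i : ULift.{v} ℕ => X i.down)).comp σ
        = (AddMonoidHom.mk' (fun v : H ⟶ ∐ fun i : ULift.{v} ℕ => X i.down =>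
            v ≫ Sigma.desc (fun i => j i.down ≫ Sigma.ι
              (fun i : ULift.{v} ℕ => X i.down) ⟨i.down+1⟩))
            fun _ _ => Preadditive.add_comp _ _ _ _ _ _).comp
          (coproductComparison H (fun i : ULift.{v} ℕ => X i.down)) :=
      DirectSum.addHom_ext fun i g => by
        simp only [AddMonoidHom.comp_apply, σ, DirectSum.toAddMonoid_of,
          AddMonoidHom.mk'_apply]
        rw [coproductComparison_of, coproductComparison_of]
        simp
    exact fun y => DFunLike.congr_fun hAB y
  have hxσ : x = σ x := (hH (fun i : ULift.{v} ℕ => X i.down)).1 (by rw [hσ, ← hu])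
  have hcomp0 : ∀ y : DirectSum (ULift.{v} ℕ) (fun i => H ⟶ X i.down),
      (σ y) (⟨0⟩ : ULift.{v} ℕ) = 0 := by
    intro y
    induction y using DirectSum.induction_on with
    | zero => rw [map_zero]; simp
    | of i g =>
        simp only [σ, DirectSum.toAddMonoid_of, AddMonoidHom.comp_apply, AddMonoidHom.mk'_apply]
        refine DirectSum.of_eq_of_ne _ _ _ ?_
        intro h
        exact Nat.succ_ne_zero i.down (congrArg ULift.down h.symm)
    | add a b ha hb => rw [map_add, DirectSum.add_apply, ha, hb, add_zero]
  have hcompS : ∀ (y : DirectSum (ULift.{v} ℕ) (fun i => H ⟶ X i.down)) (k : ℕ),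
      (σ y) (⟨k+1⟩ : ULift.{v} ℕ) = y (⟨k⟩ : ULift.{v} ℕ) ≫ j k := by
    intro y k
    induction y using DirectSum.induction_on with
    | zero => rw [map_zero]; simp
    | of i g =>
        simp only [σ, DirectSum.toAddMonoid_of, AddMonoidHom.comp_apply, AddMonoidHom.mk'_apply]
        by_cases h : i.down = k
        · cases i
          subst h
          rw [DirectSum.of_eq_same, DirectSum.of_eq_same]
        · have h1 : (⟨i.down+1⟩ : ULift.{v} ℕ) ≠ ⟨k+1⟩ := by
            intro hh; exact h (Nat.succ_injective (congrArg ULift.down hh))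
          have h2 : i ≠ (⟨k⟩ : ULift.{v} ℕ) := by
            intro hh; exact h (congrArg ULift.down hh)
          rw [DirectSum.of_eq_of_ne _ _ _ h1.symm, DirectSum.of_eq_of_ne _ _ _ h2.symm, zero_comp]
    | add a b ha hb =>
        rw [map_add, DirectSum.add_apply, DirectSum.add_apply, ha, hb, Preadditive.add_comp]
  have hzero : ∀ k : ℕ, x (⟨k⟩ : ULift.{v} ℕ) = 0 := by
    intro k
    induction k with
    | zero =>
        conv_lhs => rw [hxσ]
        exact hcomp0 x
    | succ k ih =>
        conv_lhs => rw [hxσ]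
        rw [hcompS x k, ih, zero_comp]
  have hx0 : x = 0 := by
    refine DFinsupp.ext fun i => ?_
    cases i
    exact hzero _
  rw [hx0, map_zero]


set_option maxHeartbeats 1000000 in
theorem key [HasZeroObject C] [HasShift C ℤ] [Preadditive C]
    [∀ n : ℤ, (shiftFunctor C n).Additive] [Pretriangulated C] [HasCoproducts.{v} C]
    {G : C} (hGs : IsSmallObject G) (hGg : IsWeakGenerator G)
    {F' F : C ⥤ C} [F'.CommShift ℤ] [F.CommShift ℤ]
    (hF'tri : F'.IsTriangulated) (hFtri : F.IsTriangulated)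
    (hF'pres : ∀ ι : Type v, PreservesColimitsOfShape (Discrete ι) F')
    (hFpres : ∀ ι : Type v, PreservesColimitsOfShape (Discrete ι) F)
    (ψ : F' ⟶ F)
    (hψs : ∀ (n : ℤ) (X : C), ψ.app (X⟦n⟧) ≫ (F.commShiftIso n).hom.app X
      = (F'.commShiftIso n).hom.app X ≫ (ψ.app X)⟦n⟧')
    (hψG : IsIso (ψ.app G)) (A : C) : IsIso (ψ.app A) := by
  have hPtri : ∀ {T : Triangle C}, (T ∈ distTriang C) → IsIso (ψ.app T.obj₁) →
      IsIso (ψ.app T.obj₂) → IsIso (ψ.app T.obj₃) :=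
    fun hT h1 h2 => isIso_app_of_distTriang hF'tri hFtri ψ (fun X => hψs 1 X) hT h1 h2
  have hPcell : ∀ {ι : Type v} (ns : ι → ULift.{v} ℤ),
      IsIso (ψ.app (∐ fun i => G⟦(ns i).down⟧)) :=
    fun ns => isIso_app_coproduct ψ _ (hF'pres _) (hFpres _)
      (fun i => isIso_app_shift ψ hψs G _ hψG)
  -- the attaching step
  have step : ∀ (X : C) (p : X ⟶ A), IsIso (ψ.app X) →
      ∃ (X' : C) (j : X ⟶ X') (p' : X' ⟶ A), j ≫ p' = p ∧
        (∀ (n : ℤ) (g : G⟦n⟧ ⟶ X), g ≫ p = 0 → g ≫ j = 0) ∧ IsIso (ψ.app X') := by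
    intro X p hX
    obtain ⟨X', j, d, hT⟩ := Pretriangulated.distinguished_cocone_triangle
      (Sigma.desc (f := fun w : (n : ULift.{v} ℤ) × {g : G⟦n.down⟧ ⟶ X // g ≫ p = 0} =>
        G⟦w.1.down⟧) (fun w => w.2.1))
    have hkp : (Sigma.desc (f := fun w : (n : ULift.{v} ℤ) × {g : G⟦n.down⟧ ⟶ X // g ≫ p = 0} =>
        G⟦w.1.down⟧) (fun w => w.2.1)) ≫ p = 0 := by
      ext w
      simp [w.2.2]
    obtain ⟨p', hp'⟩ := Triangle.yoneda_exact₂ _ hT p hkp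
    refine ⟨X', j, p', hp'.symm, ?_, ?_⟩
    · intro n g hg
      have hfac : g = Sigma.ι
          (fun w : (n : ULift.{v} ℤ) × {g : G⟦n.down⟧ ⟶ X // g ≫ p = 0} => G⟦w.1.down⟧)
          ⟨⟨n⟩, g, hg⟩ ≫ Sigma.desc
          (f := fun w : (n : ULift.{v} ℤ) × {g : G⟦n.down⟧ ⟶ X // g ≫ p = 0} => G⟦w.1.down⟧)
          (fun w => w.2.1) := by
        simp
      have hz := comp_distTriang_mor_zero₁₂ _ hT
      rw [hfac, Category.assoc]
      dsimp only [Triangle.mk] at hz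
      rw [hz]; exact comp_zero
    · exact hPtri hT (hPcell (ι := (n : ULift.{v} ℤ) × {g : G⟦n.down⟧ ⟶ X // g ≫ p = 0})
        (fun w => w.1)) hX
  -- the tower
  let nxt : (Σ' (X : C) (_ : X ⟶ A), IsIso (ψ.app X)) →
      (Σ' (X : C) (_ : X ⟶ A), IsIso (ψ.app X)) := fun s =>
    ⟨(step s.1 s.2.1 s.2.2).choose,
     (step s.1 s.2.1 s.2.2).choose_spec.choose_spec.choose,
     (step s.1 s.2.1 s.2.2).choose_spec.choose_spec.choose_spec.2.2⟩
  let t : ℕ → Σ' (X : C) (_ : X ⟶ A), IsIso (ψ.app X) :=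
    chainRec nxt ⟨∐ fun w : (n : ULift.{v} ℤ) × (G⟦n.down⟧ ⟶ A) => G⟦w.1.down⟧,
      Sigma.desc (f := fun w : (n : ULift.{v} ℤ) × (G⟦n.down⟧ ⟶ A) => G⟦w.1.down⟧)
        (fun w => w.2), hPcell (ι := (n : ULift.{v} ℤ) × (G⟦n.down⟧ ⟶ A)) (fun w => w.1)⟩
  let Xt : ℕ → C := fun i => (t i).1
  let pt : ∀ i, Xt i ⟶ A := fun i => (t i).2.1
  let jt : ∀ i, Xt i ⟶ Xt (i+1) := fun i =>
    (step (t i).1 (t i).2.1 (t i).2.2).choose_spec.choose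
  have hspec : ∀ i, jt i ≫ pt (i+1) = pt i ∧
      (∀ (n : ℤ) (g : G⟦n⟧ ⟶ Xt i), g ≫ pt i = 0 → g ≫ jt i = 0) := by
    intro i
    have h := (step (t i).1 (t i).2.1 (t i).2.2).choose_spec.choose_spec.choose_spec
    exact ⟨h.1, h.2.1⟩
  have hP_Xt : ∀ i, IsIso (ψ.app (Xt i)) := fun i => (t i).2.2
  -- the homotopy colimit
  let XX : ULift.{v} ℕ → C := fun i => Xt i.down
  let sY : (∐ XX) ⟶ (∐ XX) := Sigma.desc fun i => jt i.down ≫ Sigma.ι XX ⟨i.down+1⟩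
  obtain ⟨Z, q, d, hTZ⟩ := Pretriangulated.distinguished_cocone_triangle (𝟙 (∐ XX) - sY)
  have hcq : q = sY ≫ q := by
    have h0 := comp_distTriang_mor_zero₁₂ _ hTZ
    dsimp only [Triangle.mk] at h0
    rw [Preadditive.sub_comp, Category.id_comp] at h0
    exact sub_eq_zero.mp h0
  have hc0 : (𝟙 (∐ XX) - sY) ≫ Sigma.desc (fun i => pt i.down) = 0 := by
    rw [Preadditive.sub_comp, Category.id_comp, sub_eq_zero]
    ext i
    simp only [colimit.ι_desc_assoc, colimit.ι_desc, Cofan.mk_ι_app, sY, Category.assoc]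
    rw [(hspec i.down).1]
  obtain ⟨pinf, hpinf⟩ : ∃ pinf : Z ⟶ A, Limits.Sigma.desc (fun i : ULift.{v} ℕ => pt i.down) = q ≫ pinf :=
    Triangle.yoneda_exact₂ _ hTZ (Sigma.desc fun i => pt i.down) hc0
  have hq_step : ∀ i : ℕ, Sigma.ι XX ⟨i⟩ ≫ q = jt i ≫ (Sigma.ι XX ⟨i+1⟩ ≫ q) := by
    intro i
    conv_lhs => rw [hcq]
    rw [← Category.assoc]
    have : Sigma.ι XX ⟨i⟩ ≫ sY = jt i ≫ Sigma.ι XX ⟨i+1⟩ := by simp [sY]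
    rw [this, Category.assoc]
  have hικq : ∀ i : ℕ, Sigma.ι XX ⟨i⟩ ≫ q ≫ pinf = pt i := by
    intro i
    rw [← hpinf]
    exact Limits.Sigma.ι_desc (fun i : ULift.{v} ℕ => pt i.down) ⟨i⟩
  have hbij : ∀ n : ℤ, Function.Bijective fun g : G⟦n⟧ ⟶ Z => g ≫ pinf := by
    intro n
    have hsmall1 : IsSmallObject (G⟦n⟧) := isSmallObject_shift hGs n
    constructor
    · -- injectivity
      have hker : ∀ g : G⟦n⟧ ⟶ Z, g ≫ pinf = 0 → g = 0 := by
        intro g hg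
        have hgd : g ≫ d = 0 := by
          let E := shiftEquiv' C (-1 : ℤ) (1 : ℤ) (by norm_num)
          haveI : E.functor.Additive := (inferInstance : (shiftFunctor C (-1 : ℤ)).Additive)
          haveI : E.inverse.Additive := (inferInstance : (shiftFunctor C (1 : ℤ)).Additive)
          let adj := E.toAdjunction
          have h31 := comp_distTriang_mor_zero₃₁ _ hTZ
          dsimp only [Triangle.mk] at h31
          have huc : (g ≫ d) ≫ E.inverse.map (𝟙 (∐ XX) - sY) = 0 := by
            have : d ≫ E.inverse.map (𝟙 (∐ XX) - sY) = 0 := h31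
            exact (Category.assoc _ _ _).trans ((congrArg (fun x => g ≫ x) this).trans comp_zero)
          set w := (adj.homEquiv (G⟦n⟧) (∐ XX)).symm (g ≫ d) with hwdef
          have huw : g ≫ d = adj.homEquiv (G⟦n⟧) (∐ XX) w := (Equiv.apply_symm_apply _ _).symm
          have hwc : w ≫ (𝟙 (∐ XX) - sY) = 0 := by
            apply (adj.homEquiv (G⟦n⟧) (∐ XX)).injective
            rw [Adjunction.homEquiv_naturality_right, ← huw]
            refine huc.trans ?_
            simp only [Adjunction.homEquiv_unit, Functor.map_zero, comp_zero]
          have hw0 : w = 0 := by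
            apply tower_comp_injective (isSmallObject_shift hsmall1 (-1)) Xt jt
            rw [Preadditive.comp_sub, Category.comp_id, sub_eq_zero] at hwc
            exact hwc
          rw [huw, hw0]
          exact adj.homAddEquiv_zero _ _
        obtain ⟨u, hgu⟩ := Triangle.coyoneda_exact₃ _ hTZ g hgd
        obtain ⟨x, hx⟩ := (hsmall1 XX).2 u
        obtain ⟨N, gN, hN⟩ := tower_factor Xt jt q hq_step x
        rw [hx] at hN
        have hgN : g = gN ≫ (Sigma.ι XX ⟨N⟩ ≫ q) := by rw [hgu]; exact hN
        have hgN0 : gN ≫ pt N = 0 := by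
          have h := hg
          rw [hgN] at h
          rw [← hικq N]
          simpa only [Category.assoc] using h
        have hjt0 : gN ≫ jt N = 0 := (hspec N).2 n gN hgN0
        rw [hgN, hq_step N, ← Category.assoc, hjt0, zero_comp]
      intro a b hab
      have hs : (a - b) ≫ pinf = 0 := by
        rw [Preadditive.sub_comp, sub_eq_zero]
        exact hab
      have := hker _ hs
      rwa [sub_eq_zero] at this
    · -- surjectivity
      intro a
      refine ⟨Sigma.ι (fun w : (n' : ULift.{v} ℤ) × (G⟦n'.down⟧ ⟶ A) => G⟦w.1.down⟧)
        ⟨⟨n⟩, a⟩ ≫ (Sigma.ι XX ⟨0⟩ ≫ q), ?_⟩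
      show (Sigma.ι _ ⟨⟨n⟩, a⟩ ≫ (Sigma.ι XX ⟨0⟩ ≫ q)) ≫ pinf = a
      refine ((Category.assoc _ _ _).trans (congrArg (fun x => Sigma.ι
        (fun w : (n' : ULift.{v} ℤ) × (G⟦n'.down⟧ ⟶ A) => G⟦w.1.down⟧) ⟨⟨n⟩, a⟩ ≫ x)
        ((Category.assoc _ _ _).trans (hικq 0)))).trans ?_
      have hpt0 : pt 0 = Sigma.desc
          (f := fun w : (n' : ULift.{v} ℤ) × (G⟦n'.down⟧ ⟶ A) => G⟦w.1.down⟧)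
          (fun w => w.2) := rfl
      rw [hpt0]
      simp
  have hiso : IsIso pinf := (hGg pinf).2 hbij
  have hPY : IsIso (ψ.app (∐ XX)) :=
    isIso_app_coproduct ψ XX (hF'pres _) (hFpres _) (fun i => hP_Xt i.down)
  have hPZ : IsIso (ψ.app Z) := hPtri hTZ hPY hPY
  exact isIso_app_of_iso ψ (asIso pinf) hPZ

end PaperAux

open PaperAux

theorem statement_2
    {C : Type u} [Category.{v} C] [HasZeroObject C] [HasShift C ℤ] [Preadditive C]
    [∀ n : ℤ, (shiftFunctor C n).Additive] [Pretriangulated C] [HasCoproducts.{v} C]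
    -- the two symmetric monoidal structures `∧` (`M`) and `∧′` (`M'`):
    (M M' : MonoidalCategory C)
    (sM : @SymmetricCategory C _ M) (sM' : @SymmetricCategory C _ M')
    -- they have the same unit `𝕀`:
    (hunit : M'.tensorUnit = M.tensorUnit)
    -- `∧` is bi-exact:
    (addL : ∀ X : C, (@tensorLeft C _ M X).Additive)
    (addR : ∀ X : C, (@tensorRight C _ M X).Additive)
    (csL : ∀ X : C, Functor.CommShift (@tensorLeft C _ M X) ℤ)
    (csR : ∀ X : C, Functor.CommShift (@tensorRight C _ M X) ℤ)
    (trL : ∀ X : C, letI := csL X; Functor.IsTriangulated (@tensorLeft C _ M X))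
    (trR : ∀ X : C, letI := csR X; Functor.IsTriangulated (@tensorRight C _ M X))
    (pL : ∀ (X : C) (ι : Type v), PreservesColimitsOfShape (Discrete ι) (@tensorLeft C _ M X))
    (pR : ∀ (X : C) (ι : Type v), PreservesColimitsOfShape (Discrete ι) (@tensorRight C _ M X))
    -- `∧′` is bi-exact:
    (addL' : ∀ X : C, (@tensorLeft C _ M' X).Additive)
    (addR' : ∀ X : C, (@tensorRight C _ M' X).Additive)
    (csL' : ∀ X : C, Functor.CommShift (@tensorLeft C _ M' X) ℤ)
    (csR' : ∀ X : C, Functor.CommShift (@tensorRight C _ M' X) ℤ)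
    (trL' : ∀ X : C, letI := csL' X; Functor.IsTriangulated (@tensorLeft C _ M' X))
    (trR' : ∀ X : C, letI := csR' X; Functor.IsTriangulated (@tensorRight C _ M' X))
    (pL' : ∀ (X : C) (ι : Type v), PreservesColimitsOfShape (Discrete ι) (@tensorLeft C _ M' X))
    (pR' : ∀ (X : C) (ι : Type v), PreservesColimitsOfShape (Discrete ι) (@tensorRight C _ M' X))
    -- the unit `𝕀` is a small weak generator:
    (hunit_small : IsSmallObject M.tensorUnit) (hunit_gen : IsWeakGenerator M.tensorUnit)
    -- the lax monoidal structure on the identity functor from `(T, ∧)` to `(T, ∧′)`: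
    (η : M'.tensorUnit ⟶ M.tensorUnit)
    (φ : ∀ A B : C, M'.tensorObj A B ⟶ M.tensorObj A B)
    (hφ_nat : ∀ {A A' B B' : C} (f : A ⟶ A') (g : B ⟶ B'),
      M'.tensorHom f g ≫ φ A' B' = φ A B ≫ M.tensorHom f g)
    -- compatibility of `φ` with the shift in the second variable:
    (hφ_shift₂ : ∀ (n : ℤ) (A B : C),
      φ A (B⟦n⟧) ≫ (Functor.CommShift.commShiftIso (self := csL A) _ n).hom.app B = (Functor.CommShift.commShiftIso (self := csL' A) _ n).hom.app B ≫ (φ A B)⟦n⟧')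
    -- compatibility of `φ` with the shift in the first variable:
    (hφ_shift₁ : ∀ (n : ℤ) (A B : C),
      φ (A⟦n⟧) B ≫ (Functor.CommShift.commShiftIso (self := csR B) _ n).hom.app A = (Functor.CommShift.commShiftIso (self := csR' B) _ n).hom.app A ≫ (φ A B)⟦n⟧')
    -- the coherence diagrams of a lax (symmetric) monoidal functor:
    (hφ_assoc : ∀ A B Z : C,
      M'.tensorHom (φ A B) (𝟙 Z) ≫ φ (M.tensorObj A B) Z ≫ (M.associator A B Z).hom =
        (M'.associator A B Z).hom ≫ M'.tensorHom (𝟙 A) (φ B Z) ≫ φ A (M.tensorObj B Z))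
    (hφ_left_unit : ∀ A : C,
      M'.tensorHom η (𝟙 A) ≫ φ M.tensorUnit A ≫ (M.leftUnitor A).hom = (M'.leftUnitor A).hom)
    (hφ_right_unit : ∀ A : C,
      M'.tensorHom (𝟙 A) η ≫ φ A M.tensorUnit ≫ (M.rightUnitor A).hom = (M'.rightUnitor A).hom)
    (hφ_braided : ∀ A B : C,
      (sM'.braiding A B).hom ≫ φ B A = φ A B ≫ (sM.braiding A B).hom)
    -- the unit morphism and the comparison map on the units are isomorphisms:
    (hη : IsIso η) (hφ_unit : IsIso (φ M.tensorUnit M.tensorUnit)) :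
    ∀ A B : C, IsIso (φ A B) := by
  intro A B
  letI iR' : (@tensorRight C _ M' B).CommShift ℤ := csR' B
  letI iR : (@tensorRight C _ M B).CommShift ℤ := csR B
  have hnat : ∀ {X Y : C} (f : X ⟶ Y),
      (@tensorRight C _ M' B).map f ≫ φ Y B = φ X B ≫ (@tensorRight C _ M B).map f := by
    intro X Y f
    have h := hφ_nat f (𝟙 B)
    have e1 : (@tensorRight C _ M' B).map f = M'.tensorHom f (𝟙 B) := by
      rw [@MonoidalCategory.tensorHom_id C _ M' _ _ f B]; rfl
    have e2 : (@tensorRight C _ M B).map f = M.tensorHom f (𝟙 B) := by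
      rw [@MonoidalCategory.tensorHom_id C _ M _ _ f B]; rfl
    rw [e1, e2, h]
  let ψ : @tensorRight C _ M' B ⟶ @tensorRight C _ M B :=
    { app := fun X => φ X B
      naturality := fun {X Y} f => hnat f }
  have h1 : IsIso (φ M.tensorUnit B) := by
    haveI := hη
    have hiso : IsIso (M'.tensorHom η (𝟙 B)) := by
      have e1 : M'.tensorHom η (𝟙 B) = (@tensorRight C _ M' B).map η := by
        rw [@MonoidalCategory.tensorHom_id C _ M' _ _ η B]; rfl
      rw [e1]; infer_instance
    have h2 := hφ_left_unit B
    have heq : φ M.tensorUnit B = CategoryTheory.inv (M'.tensorHom η (𝟙 B)) ≫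
        (M'.leftUnitor B).hom ≫ (M.leftUnitor B).inv := by
      rw [← h2]
      simp
    rw [heq]; infer_instance
  exact key hunit_small hunit_gen (trR' B) (trR B) (fun ι => pR' B ι) (fun ι => pR B ι) ψ
    (fun n X => hφ_shift₁ n X B) h1 A
end

section
/- Let T and T′ be pretriangulated categories admitting arbitrary (small) coproducts, and let F : T → T′ be a triangulated functor with a right adjoint G : T′ → T. If S is a small weak generator of T and F(S) is small in T′, then G preserves arbitrary coproducts: for every family of objects {A_i}_{i∈I} of T′, the canonical morphism ∐_{i∈I} G(A_i) → G(∐_{i∈I} A_i) is an isomorphism. -/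
/-!
STATEMENT 3: Let `T` and `T′` be pretriangulated categories admitting arbitrary (small)
coproducts, and let `F : T ⥤ T′` be a triangulated functor with a right adjoint `G`.
If `S` is a small weak generator of `T` and `F S` is small in `T′`, then `G` preserves
arbitrary coproducts: for every family `{Aᵢ}` of objects of `T′`, the canonical morphism
`∐ᵢ G Aᵢ ⟶ G (∐ᵢ Aᵢ)` is an isomorphism.
-/

open CategoryTheory Category Limits Pretriangulated

universe v u

namespace Paper

variable {C : Type*} [Category.{v} C]

theorem coproductComparison_of [Preadditive C] (G : C) {ι : Type v} (A : ι → C)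
    [HasCoproduct A] [DecidableEq ι] (i : ι) (g : G ⟶ A i) :
    coproductComparison G A (DirectSum.of (fun i => G ⟶ A i) i g) = g ≫ Sigma.ι A i := by
  have e : coproductComparison G A = DirectSum.toAddMonoid fun i =>
      AddMonoidHom.mk' (fun g => g ≫ Sigma.ι A i) fun _ _ => Preadditive.add_comp _ _ _ _ _ _ := by
    unfold coproductComparison
    congr!
  rw [e, DirectSum.toAddMonoid_of]
  rfl

/-- Key abstract lemma: given a family of additive bijections
`Ψ Y : (P ⟶ H Y) ≃+ (Q ⟶ Y)` natural in `Y`, and assuming `P` satisfies the smallness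
condition at the family `fun i => H (A i)`, the coproduct comparison for `Q` at `A` is
bijective iff composition with the canonical map `∐ H (A i) ⟶ H (∐ A)` is bijective. -/
theorem key {D : Type*} [Category.{v} D] [Preadditive C] [Preadditive D]
    (H : D ⥤ C) (P : C) (Q : D)
    (Ψ : ∀ Y : D, (P ⟶ H.obj Y) ≃+ (Q ⟶ Y))
    (nat : ∀ {Y Y' : D} (k : Y ⟶ Y') (f : P ⟶ H.obj Y), Ψ Y' (f ≫ H.map k) = Ψ Y f ≫ k)
    {ι : Type v} (A : ι → D) [HasCoproduct A] [HasCoproduct fun i => H.obj (A i)]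
    (hP : Function.Bijective (coproductComparison P fun i => H.obj (A i))) :
    Function.Bijective (coproductComparison Q A) ↔
      Function.Bijective fun g : P ⟶ ∐ fun i => H.obj (A i) =>
        g ≫ Sigma.desc fun i => H.map (Sigma.ι A i) := by
  classical
  set δ : (∐ fun i => H.obj (A i)) ⟶ H.obj (∐ A) :=
    Sigma.desc fun i => H.map (Sigma.ι A i) with hδ
  set β := DFinsupp.mapRange.addEquiv (fun i => Ψ (A i)) with hβ
  have comm : ∀ x, Ψ (∐ A) (coproductComparison P (fun i => H.obj (A i)) x ≫ δ)
      = coproductComparison Q A (β x) := by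
    intro x
    induction x using DirectSum.induction_on with
    | zero => simp [map_zero]
    | of i g =>
        have h1 : β (DirectSum.of _ i g) = DirectSum.of (fun i => Q ⟶ A i) i (Ψ (A i) g) := by
          simp [hβ, DirectSum.of, DFinsupp.mapRange.addEquiv, DFinsupp.singleAddHom,
            AddMonoidHom.coe_mk, ZeroHom.coe_mk, DFinsupp.mapRange_single]
          exact DFinsupp.mapRange_single (hf := fun i => map_zero _)
        rw [h1, coproductComparison_of, coproductComparison_of, Category.assoc,
          Sigma.ι_desc, nat]
    | add x y hx hy =>
        simp only [map_add, Preadditive.add_comp, hx, hy]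
  have hcomp : (coproductComparison Q A : _ → (Q ⟶ ∐ A)) ∘ β
      = (fun g : P ⟶ ∐ fun i => H.obj (A i) => Ψ (∐ A) (g ≫ δ))
        ∘ (coproductComparison P fun i => H.obj (A i)) := by
    funext x; exact (comm x).symm
  constructor
  · intro hQ
    have h2 : Function.Bijective ((fun g : P ⟶ ∐ fun i => H.obj (A i) => Ψ (∐ A) (g ≫ δ))
        ∘ (coproductComparison P fun i => H.obj (A i))) := by
      rw [← hcomp]; exact hQ.comp β.bijective
    have h3 := (Function.Bijective.of_comp_iff _ hP).mp h2
    have h4 : (fun g : P ⟶ ∐ fun i => H.obj (A i) => g ≫ δ)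
        = (Ψ (∐ A)).symm ∘ (fun g : P ⟶ ∐ fun i => H.obj (A i) => Ψ (∐ A) (g ≫ δ)) := by
      funext g; simp
    rw [h4]; exact (Ψ (∐ A)).symm.bijective.comp h3
  · intro hδ'
    have h2 : Function.Bijective ((coproductComparison Q A : _ → (Q ⟶ ∐ A)) ∘ β) := by
      rw [hcomp]
      exact (((Ψ (∐ A)).bijective.comp hδ').comp hP)
    exact (Function.Bijective.of_comp_iff _ β.bijective).mp h2

theorem isSmallObject_shift [Preadditive C] [HasShift C ℤ]
    [∀ m : ℤ, (shiftFunctor C m).Additive] [HasCoproducts.{v} C]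
    {G : C} (hG : IsSmallObject G) (n : ℤ) : IsSmallObject (G⟦n⟧) := by
  intro ι A _
  haveI : ((shiftEquiv C n).functor).Additive := (inferInstance : (shiftFunctor C n).Additive)
  set adj := (shiftEquiv C n).toAdjunction with hadj
  have Ψadd : ∀ (Y : C) (f g : G ⟶ (shiftFunctor C (-n)).obj Y),
      (adj.homEquiv G Y).symm (f + g)
        = (adj.homEquiv G Y).symm f + (adj.homEquiv G Y).symm g := by
    intro Y f g
    erw [Adjunction.homEquiv_counit, Adjunction.homEquiv_counit, Adjunction.homEquiv_counit]
    erw [Functor.map_add]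
    rw [Preadditive.add_comp]
  refine (key (shiftFunctor C (-n)) G (G⟦n⟧)
    (fun Y => AddEquiv.mk' (adj.homEquiv G Y).symm (Ψadd Y))
    (fun {Y Y'} k f => adj.homEquiv_naturality_right_symm f k)
    A (hG (fun i => (A i)⟦-n⟧))).mpr ?_
  have : IsIso (Sigma.desc fun i => (shiftFunctor C (-n)).map (Sigma.ι A i)) :=
    (inferInstance : IsIso (sigmaComparison (shiftFunctor C (-n)) A))
  exact ⟨fun g₁ g₂ h => by
      simpa using (cancel_mono (Sigma.desc fun i => (shiftFunctor C (-n)).map (Sigma.ι A i))).mp h,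
    fun g => ⟨g ≫ inv (Sigma.desc fun i => (shiftFunctor C (-n)).map (Sigma.ι A i)), by simp⟩⟩

end Paper

open Paper

theorem statement_3
    {C : Type u} [Category.{v} C] [HasZeroObject C] [HasShift C ℤ] [Preadditive C]
    [∀ n : ℤ, (shiftFunctor C n).Additive] [Pretriangulated C] [HasCoproducts.{v} C]
    {D : Type u} [Category.{v} D] [HasZeroObject D] [HasShift D ℤ] [Preadditive D]
    [∀ n : ℤ, (shiftFunctor D n).Additive] [Pretriangulated D] [HasCoproducts.{v} D]
    (F : C ⥤ D) [F.Additive] [F.CommShift ℤ] [F.IsTriangulated]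
    (G : D ⥤ C) (adj : F ⊣ G)
    (S : C) (hS_small : IsSmallObject S) (hS_gen : IsWeakGenerator S)
    (hFS_small : IsSmallObject (F.obj S)) :
    ∀ ⦃ι : Type v⦄ (A : ι → D),
      IsIso (Sigma.desc (fun i => G.map (Sigma.ι A i)) : (∐ fun i => G.obj (A i)) ⟶ G.obj (∐ A)) := by
  intro ι A
  rw [hS_gen]
  intro n
  set α : F.obj (S⟦n⟧) ≅ (F.obj S)⟦n⟧ := (F.commShiftIso n).app S with hα
  have Ψnat : ∀ {Y Y' : D} (k : Y ⟶ Y') (f : S⟦n⟧ ⟶ G.obj Y),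
      ((adj.homEquiv (S⟦n⟧) Y').symm.trans α.homFromEquiv) (f ≫ G.map k)
        = ((adj.homEquiv (S⟦n⟧) Y).symm.trans α.homFromEquiv) f ≫ k := by
    intro Y Y' k f
    simp only [Equiv.trans_apply, Iso.homFromEquiv_apply, Adjunction.homEquiv_counit,
      Functor.map_comp, Category.assoc]
    rw [adj.counit_naturality]
  have Ψadd : ∀ (Y : D) (f g : S⟦n⟧ ⟶ G.obj Y),
      ((adj.homEquiv (S⟦n⟧) Y).symm.trans α.homFromEquiv) (f + g)
        = ((adj.homEquiv (S⟦n⟧) Y).symm.trans α.homFromEquiv) f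
          + ((adj.homEquiv (S⟦n⟧) Y).symm.trans α.homFromEquiv) g := by
    intro Y f g
    simp only [Equiv.trans_apply, Iso.homFromEquiv_apply, Adjunction.homEquiv_counit,
      Functor.map_add, Preadditive.add_comp, Preadditive.comp_add]
  exact (key G (S⟦n⟧) ((F.obj S)⟦n⟧)
    (fun Y => AddEquiv.mk' ((adj.homEquiv (S⟦n⟧) Y).symm.trans α.homFromEquiv) (Ψadd Y))
    (fun {Y Y'} k f => Ψnat k f)
    A (isSmallObject_shift hS_small n (fun i => G.obj (A i)))).mp
    (isSmallObject_shift hFS_small n A)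
end
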